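/- arXiv:2408.11644 — 3 statements merged into one kernel-verified Lean document; each statement's English description precedes it below -/
import Mathlib

section
/- Let p_1 ≤ p_2 ≤ ... ≤ p_t with t ≥ 2. If for some index i with 2 ≤ i ≤ t-1 we have p_i + 1 ≤ p_{i+1} ≤ p_i + p_1 - 1, then the graph H(n; p_1, ..., p_t) contains a subgraph isomorphic to K_{p_1} ∪ K_{p_2} ∪ ... ∪ K_{p_t}; in particular H(n; p_1, ..., p_t) is not (K_{p_1} ∪ ... ∪ K_{p_t})-saturated. -/
open SimpleGraph Finset

/-- `H` is a subgraph of `G` (up to isomorphism): an injective homomorphism exists. -/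
def IsSubgraphOf {α β : Type*} (H : SimpleGraph α) (G : SimpleGraph β) : Prop :=
  ∃ f : α → β, Function.Injective f ∧ ∀ a b, H.Adj a b → G.Adj (f a) (f b)

/-- `G` is `H`-saturated. -/
def IsSat {α β : Type*} (G : SimpleGraph α) (H : SimpleGraph β) : Prop :=
  ¬ IsSubgraphOf H G ∧
    ∀ u v : α, u ≠ v → ¬ G.Adj u v →
      IsSubgraphOf H (G ⊔ SimpleGraph.fromEdgeSet {s(u, v)})

/-- First position of block `i` (for `2 ≤ i`) in `H(n; p₁, …, p_t)`. -/
def blockStart (p : ℕ → ℕ) (i : ℕ) : ℕ :=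
  (p 1 - 2) + ∑ j ∈ Finset.Ico 2 i, (p j + 1)

def inBlock (p : ℕ → ℕ) (i : ℕ) (a : ℕ) : Prop :=
  blockStart p i ≤ a ∧ a < blockStart p i + (p i + 1)

/-- `H(n; p₁, …, p_t) = K_{p₁-2} ∨ (K_{p₂+1} ∪ ⋯ ∪ K_{p_t+1} ∪ I_m)`. -/
def Hgraph (n t : ℕ) (p : ℕ → ℕ) : SimpleGraph (Fin n) :=
  SimpleGraph.fromRel (fun u v =>
    (u : ℕ) < p 1 - 2 ∨ ∃ i, 2 ≤ i ∧ i ≤ t ∧ inBlock p i (u : ℕ) ∧ inBlock p i (v : ℕ))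

/-- The disjoint union `K_{p₁} ∪ K_{p₂} ∪ ⋯ ∪ K_{p_t}`. -/
def cliqueUnion (t : ℕ) (p : ℕ → ℕ) :
    SimpleGraph (Σ i : Fin t, Fin (p ((i : ℕ) + 1))) where
  Adj a b := a ≠ b ∧ a.1 = b.1
  symm := ⟨fun a b h => ⟨h.1.symm, h.2.symm⟩⟩
  loopless := ⟨fun a h => h.1 rfl⟩

/-- The disjoint union `K_{p₂} ∪ ⋯ ∪ K_{p_t}`. -/
def cliqueUnionTail (t : ℕ) (p : ℕ → ℕ) :
    SimpleGraph (Σ i : Fin (t - 1), Fin (p ((i : ℕ) + 2))) where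
  Adj a b := a ≠ b ∧ a.1 = b.1
  symm := ⟨fun a b h => ⟨h.1.symm, h.2.symm⟩⟩
  loopless := ⟨fun a h => h.1 rfl⟩

/-- Number of "leftover" join vertices after extending block `i+1`'s clique. -/
def r0 (p : ℕ → ℕ) (i : ℕ) : ℕ := p 1 + p i - (p (i + 1) + 1)

/-- Value of the embedding of `K_{p₁} ∪ ⋯ ∪ K_{p_t}` into `H`:
clique `j+1`, vertex `k` (as a natural number position). -/
def Fval (p : ℕ → ℕ) (i j k : ℕ) : ℕ :=
  if j = 0 then
    (if k < r0 p i then k else blockStart p (i + 1) + (p i + (k - r0 p i)))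
  else if j + 1 = i then blockStart p (i + 1) + k
  else if j = i then
    (if k < p i + 1 then blockStart p i + k else r0 p i + (k - (p i + 1)))
  else blockStart p (j + 1) + k

/-- The block into which (the non-join part of) clique `j+1` is mapped. -/
def cBlk (i j : ℕ) : ℕ :=
  if j = 0 ∨ j + 1 = i then i + 1 else if j = i then i else j + 1

lemma blockStart_gap (p : ℕ → ℕ) {a b : ℕ} (ha : 2 ≤ a) (hab : a < b) :
    blockStart p a + (p a + 1) ≤ blockStart p b := by
  have h1 : (∑ j ∈ Finset.Ico 2 a, (p j + 1)) + ∑ j ∈ Finset.Ico a b, (p j + 1)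
      = ∑ j ∈ Finset.Ico 2 b, (p j + 1) :=
    Finset.sum_Ico_consecutive _ ha hab.le
  have h2 : p a + 1 ≤ ∑ j ∈ Finset.Ico a b, (p j + 1) :=
    Finset.single_le_sum (f := fun j => p j + 1) (fun _ _ => Nat.zero_le _) (Finset.mem_Ico.mpr ⟨le_refl a, hab⟩)
  unfold blockStart
  omega

lemma blockStart_mono (p : ℕ → ℕ) {a b : ℕ} (ha : 2 ≤ a) (hab : a ≤ b) :
    blockStart p a ≤ blockStart p b := by
  rcases Nat.eq_or_lt_of_le hab with rfl | h
  · exact le_rfl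
  · have := blockStart_gap p ha h
    omega

set_option maxHeartbeats 2000000 in
/-- If `p_i + 1 ≤ p_{i+1} ≤ p_i + p₁ - 1` for some `2 ≤ i ≤ t-1`, then
`H(n; p₁, …, p_t)` contains `K_{p₁} ∪ ⋯ ∪ K_{p_t}`, hence is not saturated. -/
theorem Hgraph_not_saturated_of_close_gap (n t : ℕ) (p : ℕ → ℕ) (ht : 2 ≤ t)
    (hp1 : 2 ≤ p 1)
    (hmono : ∀ i j, 1 ≤ i → i ≤ j → j ≤ t → p i ≤ p j)
    (hfit : blockStart p (t + 1) ≤ n)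
    (i : ℕ) (hi1 : 2 ≤ i) (hi2 : i ≤ t - 1)
    (hlow : p i + 1 ≤ p (i + 1)) (hhigh : p (i + 1) ≤ p i + p 1 - 1) :
    IsSubgraphOf (cliqueUnion t p) (Hgraph n t p) ∧
      ¬ IsSat (Hgraph n t p) (cliqueUnion t p) := by
  have hit : i + 1 ≤ t := by omega
  have hr : r0 p i + (p (i + 1) + 1) = p 1 + p i := by
    unfold r0; omega
  have hB2 : blockStart p 2 = p 1 - 2 := by
    unfold blockStart; simp
  have hBgeJ : ∀ c, 2 ≤ c → p 1 - 2 ≤ blockStart p c := by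
    intro c hc
    have := blockStart_mono p (le_refl 2) hc
    omega
  have hBi := hBgeJ i hi1
  have hBi1 := hBgeJ (i + 1) (by omega)
  have hBii := blockStart_gap p hi1 (Nat.lt_succ_self i)
  have hBn : ∀ c, 2 ≤ c → c ≤ t → blockStart p c + (p c + 1) ≤ n := by
    intro c h1 h2
    have := blockStart_gap p h1 (by omega : c < t + 1)
    omega
  have hp1n : p 1 - 2 ≤ n := by
    have h1 := hBgeJ (t + 1) (by omega)
    omega
  have hFn : ∀ j k, j < t → k < p (j + 1) → Fval p i j k < n := by
    intro j k hj hk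
    have hBni := hBn i hi1 (by omega)
    have hBni1 := hBn (i + 1) (by omega) hit
    simp only [Fval]
    split_ifs
    all_goals try (have e0 : p (j + 1) = p 1 := by rw [show j + 1 = 1 from by omega])
    all_goals try (have e1 : p (j + 1) = p i := by rw [show j + 1 = i from by omega])
    all_goals try (have e2 : p (j + 1) = p (i + 1) := by rw [show j + 1 = i + 1 from by omega])
    all_goals first
      | omega
      | (have := hBn (j + 1) (by omega) (by omega); omega)
  have hdisj : ∀ c d x y, blockStart p c + x = blockStart p d + y → 2 ≤ c → 2 ≤ d →
      x < p c + 1 → y < p d + 1 → c = d ∧ x = y := by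
    intro c d x y he hc hd hx hy
    rcases Nat.lt_trichotomy c d with h | h | h
    · have := blockStart_gap p hc h; omega
    · subst h; omega
    · have := blockStart_gap p hd h; omega
  have hFinj : ∀ j k j' l, j < t → k < p (j + 1) → j' < t → l < p (j' + 1) →
      Fval p i j k = Fval p i j' l → j = j' ∧ k = l := by
    intro j k j' l hj hk hj' hl hab
    simp only [Fval] at hab
    split_ifs at hab
    all_goals try (have e0 : p (j + 1) = p 1 := by rw [show j + 1 = 1 from by omega])
    all_goals try (have e0' : p (j' + 1) = p 1 := by rw [show j' + 1 = 1 from by omega])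
    all_goals try (have e1 : p (j + 1) = p i := by rw [show j + 1 = i from by omega])
    all_goals try (have e1' : p (j' + 1) = p i := by rw [show j' + 1 = i from by omega])
    all_goals try (have e2 : p (j + 1) = p (i + 1) := by rw [show j + 1 = i + 1 from by omega])
    all_goals try (have e2' : p (j' + 1) = p (i + 1) := by rw [show j' + 1 = i + 1 from by omega])
    all_goals first
      | omega
      | (obtain ⟨hcd, hxy⟩ := hdisj _ _ _ _ hab (by omega) (by omega) (by omega) (by omega);
         omega)
      | (have hq := hBgeJ (j + 1) (by omega); omega)
      | (have hq := hBgeJ (j' + 1) (by omega); omega)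
      | (have hq1 := hBgeJ (j + 1) (by omega); have hq2 := hBgeJ (j' + 1) (by omega); omega)
  have hshape : ∀ j k, j < t → k < p (j + 1) →
      Fval p i j k < p 1 - 2 ∨
        (2 ≤ cBlk i j ∧ cBlk i j ≤ t ∧ blockStart p (cBlk i j) ≤ Fval p i j k ∧
          Fval p i j k < blockStart p (cBlk i j) + (p (cBlk i j) + 1)) := by
    intro j k hj hk
    simp only [Fval, cBlk]
    split_ifs
    all_goals try (have e0 : p (j + 1) = p 1 := by rw [show j + 1 = 1 from by omega])
    all_goals try (have e1 : p (j + 1) = p i := by rw [show j + 1 = i from by omega])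
    all_goals try (have e2 : p (j + 1) = p (i + 1) := by rw [show j + 1 = i + 1 from by omega])
    all_goals first
      | (left; omega)
      | (right; exact ⟨by omega, by omega, by omega, by omega⟩)
  have hAdjJoin : ∀ (x y : ℕ) (hx : x < n) (hy : y < n), x ≠ y → x < p 1 - 2 →
      (Hgraph n t p).Adj ⟨x, hx⟩ ⟨y, hy⟩ := by
    intro x y hx hy hne h
    exact ⟨Fin.ne_of_val_ne hne, Or.inl (Or.inl h)⟩
  have hAdjBlock : ∀ (x y : ℕ) (hx : x < n) (hy : y < n) (c : ℕ), x ≠ y → 2 ≤ c → c ≤ t →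
      blockStart p c ≤ x → x < blockStart p c + (p c + 1) →
      blockStart p c ≤ y → y < blockStart p c + (p c + 1) →
      (Hgraph n t p).Adj ⟨x, hx⟩ ⟨y, hy⟩ := by
    intro x y hx hy c hne h1 h2 h3 h4 h5 h6
    exact ⟨Fin.ne_of_val_ne hne, Or.inl (Or.inr ⟨c, h1, h2, ⟨h3, h4⟩, ⟨h5, h6⟩⟩)⟩
  have hsub : IsSubgraphOf (cliqueUnion t p) (Hgraph n t p) := by
    refine ⟨fun a => ⟨Fval p i a.1.1 a.2.1, hFn _ _ a.1.isLt a.2.isLt⟩, ?_, ?_⟩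
    · intro a b hab
      rcases a with ⟨⟨j, hj⟩, ⟨k, hk⟩⟩
      rcases b with ⟨⟨j', hj'⟩, ⟨l, hl⟩⟩
      have h : Fval p i j k = Fval p i j' l := congrArg Fin.val hab
      obtain ⟨h1, h2⟩ := hFinj j k j' l hj hk hj' hl h
      subst h1; subst h2; rfl
    · intro a b hab
      rcases a with ⟨⟨j, hj⟩, ⟨k, hk⟩⟩
      rcases b with ⟨⟨j', hj'⟩, ⟨l, hl⟩⟩
      obtain ⟨hne, hfst⟩ := hab
      simp only [Fin.mk.injEq] at hfst
      subst hfst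
      have hkl : k ≠ l := by
        intro h; subst h; exact hne rfl
      have hne2 : Fval p i j k ≠ Fval p i j l := fun h =>
        hkl (hFinj j k j l hj hk hj' hl h).2
      rcases hshape j k hj hk with h1 | ⟨hc1, hc2, hc3, hc4⟩ <;>
        rcases hshape j l hj' hl with h2 | ⟨hd1, hd2, hd3, hd4⟩
      · exact hAdjJoin _ _ _ _ hne2 h1
      · exact hAdjJoin _ _ _ _ hne2 h1
      · exact (hAdjJoin _ _ _ _ (Ne.symm hne2) h2).symm
      · exact hAdjBlock _ _ _ _ _ hne2 hc1 hc2 hc3 hc4 hd3 hd4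
  exact ⟨hsub, fun hsat => hsat.1 hsub⟩
end

section
/- Let t ≥ 2 and p_1 ≤ p_2 ≤ ... ≤ p_t with p_1 ≥ 2. The graph H(n; p_1, p_2, ..., p_t) is (K_{p_1} ∪ K_{p_2} ∪ ... ∪ K_{p_t})-saturated if and only if for every i with 2 ≤ i ≤ t-1, either p_{i+1} - p_i ≥ p_1 or p_{i+1} = p_i. -/
open SimpleGraph Finset

lemma inBlock_iff (p : ℕ → ℕ) (i a : ℕ) :
    inBlock p i a ↔ blockStart p i ≤ a ∧ a < blockStart p i + (p i + 1) := Iff.rfl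

lemma blockStart_succ (p : ℕ → ℕ) {i : ℕ} (hi : 2 ≤ i) :
    blockStart p (i + 1) = blockStart p i + (p i + 1) := by
  unfold blockStart
  rw [Finset.sum_Ico_succ_top hi]
  ring

lemma blockStart_mono_s3 (p : ℕ → ℕ) {i j : ℕ} (h : i ≤ j) :
    blockStart p i ≤ blockStart p j := by
  unfold blockStart
  exact Nat.add_le_add_left (Finset.sum_le_sum_of_subset (Finset.Ico_subset_Ico le_rfl h)) _

lemma blockStart_step (p : ℕ → ℕ) {i j : ℕ} (hi : 2 ≤ i) (hij : i < j) :
    blockStart p i + (p i + 1) ≤ blockStart p j := by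
  rw [← blockStart_succ p hi]
  exact blockStart_mono_s3 p hij

lemma blockStart_two (p : ℕ → ℕ) : blockStart p 2 = p 1 - 2 := by
  unfold blockStart
  simp

lemma inBlock_unique (p : ℕ → ℕ) {i j a : ℕ} (hi : 2 ≤ i) (hj : 2 ≤ j)
    (h1 : inBlock p i a) (h2 : inBlock p j a) : i = j := by
  rw [inBlock_iff] at h1 h2
  rcases lt_trichotomy i j with h | h | h
  · have := blockStart_step p hi h
    omega
  · exact h
  · have := blockStart_step p hj h
    omega

lemma no_packing (p : ℕ → ℕ) (hp1 : 2 ≤ p 1) :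
    ∀ t, 1 ≤ t →
    (∀ i j, 1 ≤ i → i ≤ j → j ≤ t → p i ≤ p j) →
    (∀ i, 2 ≤ i → i + 1 ≤ t → (p i + p 1 ≤ p (i + 1) ∨ p (i + 1) = p i)) →
    ∀ b c : ℕ → ℕ,
    (∀ j, 1 ≤ j → j ≤ t → 2 ≤ b j ∧ b j ≤ t) →
    (∑ j ∈ Finset.Icc 1 t, c j ≤ p 1 - 2) →
    (∀ i, 2 ≤ i → i ≤ t →
      ∑ j ∈ (Finset.Icc 1 t).filter (fun j => b j = i), (p j - c j) ≤ p i + 1) →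
    False := by
  intro t
  induction t using Nat.strong_induction_on with
  | _ t IH =>
  intro ht hmono hcond b c hb hc hcap
  rcases Nat.lt_or_ge t 2 with ht2 | ht2
  · have h1 := hb 1 le_rfl (by omega)
    omega
  -- basic facts
  have hcj : ∀ j, 1 ≤ j → j ≤ t → c j ≤ p 1 - 2 := by
    intro j h1 h2
    refine le_trans ?_ hc
    exact Finset.single_le_sum (f := c) (fun _ _ => Nat.zero_le _)
      (Finset.mem_Icc.mpr ⟨h1, h2⟩)
  have hcpair : ∀ j k, 1 ≤ j → j ≤ t → 1 ≤ k → k ≤ t → j ≠ k →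
      c j + c k ≤ p 1 - 2 := by
    intro j k h1 h2 h3 h4 hjk
    refine le_trans ?_ hc
    have hsub : ({j, k} : Finset ℕ) ⊆ Finset.Icc 1 t := by
      intro x hx
      simp only [Finset.mem_insert, Finset.mem_singleton] at hx
      rcases hx with rfl | rfl <;> exact Finset.mem_Icc.mpr ⟨by omega, by omega⟩
    calc c j + c k = ∑ x ∈ ({j, k} : Finset ℕ), c x := (Finset.sum_pair (f := c) hjk).symm
      _ ≤ _ := Finset.sum_le_sum_of_subset hsub
  have hsingle : ∀ j, 1 ≤ j → j ≤ t → p j - c j ≤ p (b j) + 1 := by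
    intro j h1 h2
    have hbj := hb j h1 h2
    refine le_trans ?_ (hcap (b j) hbj.1 hbj.2)
    exact Finset.single_le_sum (f := fun j => p j - c j) (fun _ _ => Nat.zero_le _)
      (Finset.mem_filter.mpr ⟨Finset.mem_Icc.mpr ⟨h1, h2⟩, rfl⟩)
  have hpair : ∀ j k, 1 ≤ j → j ≤ t → 1 ≤ k → k ≤ t → j ≠ k → b j = b k →
      (p j - c j) + (p k - c k) ≤ p (b j) + 1 := by
    intro j k h1 h2 h3 h4 hjk hbb
    have hbj := hb j h1 h2
    refine le_trans ?_ (hcap (b j) hbj.1 hbj.2)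
    have hsub : ({j, k} : Finset ℕ) ⊆ (Finset.Icc 1 t).filter (fun x => b x = b j) := by
      intro x hx
      simp only [Finset.mem_insert, Finset.mem_singleton] at hx
      rcases hx with rfl | rfl
      · exact Finset.mem_filter.mpr ⟨Finset.mem_Icc.mpr ⟨h1, h2⟩, rfl⟩
      · exact Finset.mem_filter.mpr ⟨Finset.mem_Icc.mpr ⟨h3, h4⟩, hbb.symm⟩
    calc (p j - c j) + (p k - c k)
        = ∑ x ∈ ({j, k} : Finset ℕ), (p x - c x) := (Finset.sum_pair (f := fun x => p x - c x) hjk).symm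
      _ ≤ _ := Finset.sum_le_sum_of_subset hsub
  by_cases hv : p 1 = p t
  · -- all values equal: b injective on Icc 1 t, pigeonhole
    have hall : ∀ j, 1 ≤ j → j ≤ t → p j = p 1 := by
      intro j h1 h2
      have := hmono 1 j le_rfl h1 h2
      have := hmono j t h1 h2 le_rfl
      omega
    have hinj : Set.InjOn b (Finset.Icc 1 t : Set ℕ) := by
      intro j hj k hk hbb
      by_contra hjk
      simp only [Finset.coe_Icc, Set.mem_Icc] at hj hk
      have h1 := hpair j k hj.1 hj.2 hk.1 hk.2 hjk hbb
      have h2 := hcpair j k hj.1 hj.2 hk.1 hk.2 hjk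
      have hbj := hb j hj.1 hj.2
      have e1 := hall j hj.1 hj.2
      have e2 := hall k hk.1 hk.2
      have e3 := hall (b j) (by omega) hbj.2
      have := hcj j hj.1 hj.2
      have := hcj k hk.1 hk.2
      omega
    have hmaps : ∀ j ∈ Finset.Icc 1 t, b j ∈ Finset.Icc 2 t := by
      intro j hj
      rw [Finset.mem_Icc] at hj ⊢
      exact hb j hj.1 hj.2
    have := Finset.card_le_card_of_injOn b hmaps hinj
    rw [Nat.card_Icc, Nat.card_Icc] at this
    omega
  · -- p 1 < p t
    have hlt : p 1 < p t := lt_of_le_of_ne (hmono 1 t le_rfl (by omega) le_rfl) hv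
    have hex : ∃ j, 1 ≤ j ∧ p j = p t := ⟨t, by omega, rfl⟩
    set a := Nat.find hex with ha_def
    have haP : 1 ≤ a ∧ p a = p t := Nat.find_spec hex
    have hamin : ∀ j, j < a → ¬(1 ≤ j ∧ p j = p t) := fun j h => Nat.find_min hex h
    have hat : a ≤ t := Nat.find_le ⟨by omega, rfl⟩
    have ha2 : 2 ≤ a := by
      rcases Nat.lt_or_ge a 2 with h | h
      · interval_cases a
        · omega
        · exact absurd haP.2 (by omega)
      · exact h
    have hbelow : ∀ j, 1 ≤ j → j < a → p j < p t := by
      intro j h1 h2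
      have := hmono j t h1 (by omega) le_rfl
      have := hamin j h2
      omega
    have hjump : ∀ m, 2 ≤ m → m < a → p m ≤ p t - p 1 := by
      intro m hm2 hma
      have ha3 : 3 ≤ a := by omega
      have hc1 := hcond (a - 1) (by omega) (by omega)
      have hlow := hbelow (a - 1) (by omega) (by omega)
      have heq : a - 1 + 1 = a := by omega
      rw [heq] at hc1
      have hmle : p m ≤ p (a - 1) := hmono m (a - 1) (by omega) (by omega) (by omega)
      omega
    have claim1 : ∀ j, a ≤ j → j ≤ t → a ≤ b j := by
      intro j h1 h2
      by_contra hlt'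
      push_neg at hlt'
      have hbj := hb j (by omega) h2
      have hs := hsingle j (by omega) h2
      have hpj : p j = p t := by
        have := hmono a j haP.1 h1 h2
        have := hmono j t (by omega) h2 le_rfl
        omega
      have := hjump (b j) hbj.1 hlt'
      have := hcj j (by omega) h2
      omega
    have claim2 : ∀ j k, 1 ≤ j → j ≤ t → 1 ≤ k → k ≤ t → j ≠ k → b j = b k →
        a ≤ j → False := by
      intro j k h1 h2 h3 h4 hjk hbb haj
      have hbtop := claim1 j haj h2
      have hbj := hb j h1 h2
      have hpbj : p (b j) = p t := by
        have := hmono a (b j) haP.1 hbtop hbj.2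
        have := hmono (b j) t (by omega) hbj.2 le_rfl
        omega
      have hpj : p j = p t := by
        have := hmono a j haP.1 haj h2
        have := hmono j t h1 h2 le_rfl
        omega
      have hpk : p 1 ≤ p k := hmono 1 k le_rfl h3 h4
      have hp := hpair j k h1 h2 h3 h4 hjk hbb
      have hcc := hcpair j k h1 h2 h3 h4 hjk
      have := hcj j h1 h2
      have := hcj k h3 h4
      omega
    -- b maps Icc a t injectively into Icc a t, hence surjectively
    have hmaps2 : ∀ j ∈ Finset.Icc a t, b j ∈ Finset.Icc a t := by
      intro j hj
      rw [Finset.mem_Icc] at hj ⊢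
      exact ⟨claim1 j hj.1 hj.2, (hb j (by omega) hj.2).2⟩
    have hinj2 : Set.InjOn b (Finset.Icc a t : Set ℕ) := by
      intro j hj k hk hbb
      by_contra hjk
      simp only [Finset.coe_Icc, Set.mem_Icc] at hj hk
      exact claim2 j k (by omega) hj.2 (by omega) hk.2 hjk hbb hj.1
    have hsurj : ∀ i ∈ Finset.Icc a t, ∃ j ∈ Finset.Icc a t, b j = i := by
      have := Finset.surj_on_of_inj_on_of_card_le (s := Finset.Icc a t)
        (t := Finset.Icc a t) (f := fun j _ => b j)
        (fun j hj => hmaps2 j hj) (fun j₁ j₂ h1 h2 he => hinj2 h1 h2 he) le_rfl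
      intro i hi
      obtain ⟨j, hj, he⟩ := this i hi
      exact ⟨j, hj, he.symm⟩
    have hblow : ∀ j, 1 ≤ j → j < a → b j < a := by
      intro j h1 h2
      by_contra hge
      push_neg at hge
      have hbj := hb j h1 (by omega)
      obtain ⟨k, hk, hbk⟩ := hsurj (b j) (Finset.mem_Icc.mpr ⟨hge, hbj.2⟩)
      rw [Finset.mem_Icc] at hk
      exact claim2 k j (by omega) hk.2 h1 (by omega) (by omega) hbk hk.1
    -- apply induction hypothesis with t' = a - 1
    refine IH (a - 1) (by omega) (by omega)
      (fun i j h1 h2 h3 => hmono i j h1 h2 (by omega))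
      (fun i h1 h2 => hcond i h1 (by omega)) b c
      (fun j h1 h2 => ⟨(hb j h1 (by omega)).1, by have := hblow j h1 (by omega); omega⟩)
      (le_trans (Finset.sum_le_sum_of_subset (Finset.Icc_subset_Icc le_rfl (by omega))) hc)
      (fun i h1 h2 => ?_)
    refine le_trans (Finset.sum_le_sum_of_subset ?_) (hcap i h1 (by omega))
    exact Finset.filter_subset_filter _ (Finset.Icc_subset_Icc le_rfl (by omega))


lemma Hgraph_adj {n t : ℕ} {p : ℕ → ℕ} {u v : Fin n} :
    (Hgraph n t p).Adj u v ↔ u ≠ v ∧ ((u : ℕ) < p 1 - 2 ∨ (v : ℕ) < p 1 - 2 ∨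
      ∃ i, 2 ≤ i ∧ i ≤ t ∧ inBlock p i (u : ℕ) ∧ inBlock p i (v : ℕ)) := by
  unfold Hgraph
  rw [SimpleGraph.fromRel_adj]
  constructor
  · rintro ⟨h1, h2⟩
    refine ⟨h1, ?_⟩
    rcases h2 with (h | ⟨i, hi1, hi2, hi3, hi4⟩) | (h | ⟨i, hi1, hi2, hi3, hi4⟩)
    · exact Or.inl h
    · exact Or.inr (Or.inr ⟨i, hi1, hi2, hi3, hi4⟩)
    · exact Or.inr (Or.inl h)
    · exact Or.inr (Or.inr ⟨i, hi1, hi2, hi4, hi3⟩)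
  · rintro ⟨h1, h2⟩
    refine ⟨h1, ?_⟩
    rcases h2 with h | h | ⟨i, hi1, hi2, hi3, hi4⟩
    · exact Or.inl (Or.inl h)
    · exact Or.inr (Or.inl h)
    · exact Or.inl (Or.inr ⟨i, hi1, hi2, hi3, hi4⟩)

lemma addEdge_embeds (n t : ℕ) (p : ℕ → ℕ) (ht : 2 ≤ t) (hp1 : 2 ≤ p 1)
    (hmono : ∀ i j, 1 ≤ i → i ≤ j → j ≤ t → p i ≤ p j)
    (hfit : blockStart p (t + 1) + 1 ≤ n)
    (u v : Fin n) (hne : u ≠ v) (hna : ¬ (Hgraph n t p).Adj u v) :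
    IsSubgraphOf (cliqueUnion t p) (Hgraph n t p ⊔ SimpleGraph.fromEdgeSet {s(u, v)}) := by
  have hUV : (u : ℕ) ≠ (v : ℕ) := fun h => hne (Fin.ext h)
  have hfacts : ¬ ((u : ℕ) < p 1 - 2 ∨ (v : ℕ) < p 1 - 2 ∨
      ∃ i, 2 ≤ i ∧ i ≤ t ∧ inBlock p i (u : ℕ) ∧ inBlock p i (v : ℕ)) := by
    intro h
    exact hna (Hgraph_adj.mpr ⟨hne, h⟩)
  push_neg at hfacts
  obtain ⟨hucore, hvcore, hnotboth⟩ := hfacts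
  have hnbk : ∀ i, 2 ≤ i → i ≤ t →
      ¬ ((blockStart p i ≤ (u : ℕ) ∧ (u : ℕ) < blockStart p i + (p i + 1)) ∧
         (blockStart p i ≤ (v : ℕ) ∧ (v : ℕ) < blockStart p i + (p i + 1))) :=
    fun i h1 h2 h =>
      hnotboth i h1 h2 ((inBlock_iff p i _).mpr h.1) ((inBlock_iff p i _).mpr h.2)
  -- bounds
  have hbs2 : p 1 - 2 ≤ blockStart p 2 := by rw [blockStart_two]
  have hblkfit : ∀ j, 2 ≤ j → j ≤ t → blockStart p j + p j + 1 ≤ n := by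
    intro j h2 h3
    have h4 : blockStart p (j + 1) ≤ blockStart p (t + 1) := blockStart_mono_s3 p (by omega)
    rw [blockStart_succ p h2] at h4
    omega
  have hcoren : p 1 - 2 < n := by
    have := blockStart_mono_s3 p (show 2 ≤ t + 1 by omega)
    rw [blockStart_two] at this
    omega
  -- the embedding, as a ℕ-valued function
  set g : Fin t → ℕ → ℕ := fun i x =>
    if (i : ℕ) = 0 then
      (if x < p 1 - 2 then x
       else if x = p 1 - 2 then (u : ℕ) else (v : ℕ))
    else
      (if blockStart p ((i : ℕ) + 1) + x = (u : ℕ) ∨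
          blockStart p ((i : ℕ) + 1) + x = (v : ℕ)
       then blockStart p ((i : ℕ) + 1) + p ((i : ℕ) + 1)
       else blockStart p ((i : ℕ) + 1) + x) with hg
  -- facts about g on block cliques
  have hblk : ∀ (i : Fin t) (x : ℕ), x < p ((i : ℕ) + 1) → (i : ℕ) ≠ 0 →
      blockStart p ((i : ℕ) + 1) ≤ g i x ∧
      g i x ≤ blockStart p ((i : ℕ) + 1) + p ((i : ℕ) + 1) ∧
      g i x ≠ (u : ℕ) ∧ g i x ≠ (v : ℕ) := by
    intro i x hxlt ha
    have hj2 : 2 ≤ (i : ℕ) + 1 := by omega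
    have hjt : (i : ℕ) + 1 ≤ t := by have := i.isLt; omega
    have hnbi := hnbk ((i : ℕ) + 1) hj2 hjt
    simp only [hg, if_neg ha]
    by_cases hc : blockStart p ((i : ℕ) + 1) + x = (u : ℕ) ∨
        blockStart p ((i : ℕ) + 1) + x = (v : ℕ)
    · rw [if_pos hc]
      refine ⟨by omega, le_rfl, ?_, ?_⟩
      · intro he
        rcases hc with hc | hc
        · omega
        · exact hnbi ⟨⟨by omega, by omega⟩, ⟨by omega, by omega⟩⟩
      · intro he
        rcases hc with hc | hc
        · exact hnbi ⟨⟨by omega, by omega⟩, ⟨by omega, by omega⟩⟩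
        · omega
    · rw [if_neg hc]
      push_neg at hc
      exact ⟨by omega, by omega, hc.1, hc.2⟩
  -- facts about g on the first clique
  have hcore : ∀ (i : Fin t) (x : ℕ), x < p 1 → (i : ℕ) = 0 →
      (x < p 1 - 2 ∧ g i x = x) ∨
      (x = p 1 - 2 ∧ g i x = (u : ℕ)) ∨
      (x = p 1 - 1 ∧ g i x = (v : ℕ)) := by
    intro i x hxlt ha
    simp only [hg, if_pos ha]
    by_cases h1 : x < p 1 - 2
    · exact Or.inl ⟨h1, by rw [if_pos h1]⟩
    · by_cases h2 : x = p 1 - 2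
      · exact Or.inr (Or.inl ⟨h2, by rw [if_neg h1, if_pos h2]⟩)
      · exact Or.inr (Or.inr ⟨by omega, by rw [if_neg h1, if_neg h2]⟩)
  have hp1eq : ∀ (i : Fin t), (i : ℕ) = 0 → p ((i : ℕ) + 1) = p 1 := by
    intro i h
    rw [h]
  have hgbound : ∀ (i : Fin t) (x : ℕ), x < p ((i : ℕ) + 1) → g i x < n := by
    intro i x hxlt
    by_cases ha : (i : ℕ) = 0
    · have hx1 : x < p 1 := by have := hp1eq i ha; omega
      rcases hcore i x hx1 ha with ⟨h1, h2⟩ | ⟨h1, h2⟩ | ⟨h1, h2⟩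
      · omega
      · rw [h2]; exact u.isLt
      · rw [h2]; exact v.isLt
    · have h1 := hblk i x hxlt ha
      have hjt : (i : ℕ) + 1 ≤ t := by have := i.isLt; omega
      have := hblkfit ((i : ℕ) + 1) (by omega) hjt
      omega
  -- injectivity on values
  have hginj : ∀ (i i' : Fin t) (x y : ℕ), x < p ((i : ℕ) + 1) → y < p ((i' : ℕ) + 1) →
      g i x = g i' y → (i : ℕ) = (i' : ℕ) ∧ x = y := by
    intro i i' x y hx hy hab
    by_cases hi : (i : ℕ) = 0 <;> by_cases hi' : (i' : ℕ) = 0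
    · -- both in first clique
      have hx1 : x < p 1 := by have := hp1eq i hi; omega
      have hy1 : y < p 1 := by have := hp1eq i' hi'; omega
      rcases hcore i x hx1 hi with ⟨h1, h2⟩ | ⟨h1, h2⟩ | ⟨h1, h2⟩ <;>
        rcases hcore i' y hy1 hi' with ⟨h3, h4⟩ | ⟨h3, h4⟩ | ⟨h3, h4⟩ <;>
        exact ⟨by omega, by omega⟩
    · exfalso
      have h1 := hblk i' y hy hi'
      have h2 : blockStart p 2 ≤ blockStart p ((i' : ℕ) + 1) := blockStart_mono_s3 p (by omega)
      have hx1 : x < p 1 := by have := hp1eq i hi; omega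
      rcases hcore i x hx1 hi with ⟨h3, h4⟩ | ⟨h3, h4⟩ | ⟨h3, h4⟩ <;> omega
    · exfalso
      have h1 := hblk i x hx hi
      have h2 : blockStart p 2 ≤ blockStart p ((i : ℕ) + 1) := blockStart_mono_s3 p (by omega)
      have hy1 : y < p 1 := by have := hp1eq i' hi'; omega
      rcases hcore i' y hy1 hi' with ⟨h3, h4⟩ | ⟨h3, h4⟩ | ⟨h3, h4⟩ <;> omega
    · -- both in block cliques
      rcases lt_trichotomy (i : ℕ) (i' : ℕ) with hii | hii | hii
      · exfalso
        have h1 := hblk i x hx hi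
        have h2 := hblk i' y hy hi'
        have h3 := blockStart_step p (show 2 ≤ (i : ℕ) + 1 by omega)
          (show (i : ℕ) + 1 < (i' : ℕ) + 1 by omega)
        omega
      · refine ⟨hii, ?_⟩
        have hy' : y < p ((i : ℕ) + 1) := by rw [hii]; exact hy
        have hgy : g i' y = g i y := by
          simp only [hg]
          rw [hii]
        rw [hgy] at hab
        simp only [hg, if_neg hi] at hab
        set s := blockStart p ((i : ℕ) + 1) with hs
        have hnbi := hnbk ((i : ℕ) + 1) (by omega) (by have := i.isLt; omega)
        by_cases hcx : s + x = (u : ℕ) ∨ s + x = (v : ℕ) <;>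
          by_cases hcy : s + y = (u : ℕ) ∨ s + y = (v : ℕ)
        · rw [if_pos hcx, if_pos hcy] at hab
          by_cases hxy : x = y
          · exact hxy
          · exfalso
            rcases hcx with hcx | hcx <;> rcases hcy with hcy | hcy
            · omega
            · exact hnbi ⟨⟨by omega, by omega⟩, ⟨by omega, by omega⟩⟩
            · exact hnbi ⟨⟨by omega, by omega⟩, ⟨by omega, by omega⟩⟩
            · omega
        · rw [if_pos hcx, if_neg hcy] at hab; exfalso; omega
        · rw [if_neg hcx, if_pos hcy] at hab; exfalso; omega
        · rw [if_neg hcx, if_neg hcy] at hab; omega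
      · exfalso
        have h1 := hblk i x hx hi
        have h2 := hblk i' y hy hi'
        have h3 := blockStart_step p (show 2 ≤ (i' : ℕ) + 1 by omega)
          (show (i' : ℕ) + 1 < (i : ℕ) + 1 by omega)
        omega
  refine ⟨fun a => ⟨g a.1 (a.2 : ℕ), hgbound a.1 (a.2 : ℕ) a.2.isLt⟩, ?_, ?_⟩
  · rintro ⟨i, x⟩ ⟨i', y⟩ hab
    have hval : g i (x : ℕ) = g i' (y : ℕ) := by
      simpa using congrArg Fin.val hab
    obtain ⟨h1, h2⟩ := hginj i i' (x : ℕ) (y : ℕ) x.isLt y.isLt hval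
    have : i = i' := Fin.ext h1
    subst this
    exact congrArg (Sigma.mk i) (Fin.ext h2)
  · rintro ⟨i, x⟩ ⟨i', y⟩ ⟨hab, hii⟩
    obtain rfl : i = i' := hii
    have hgne : g i (x : ℕ) ≠ g i (y : ℕ) := by
      intro h
      obtain ⟨-, h2⟩ := hginj i i (x : ℕ) (y : ℕ) x.isLt y.isLt h
      exact hab (congrArg (Sigma.mk i) (Fin.ext h2))
    show (Hgraph n t p ⊔ SimpleGraph.fromEdgeSet {s(u, v)}).Adj
      ⟨g i (x : ℕ), hgbound i (x : ℕ) x.isLt⟩ ⟨g i (y : ℕ), hgbound i (y : ℕ) y.isLt⟩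
    have hfne : (⟨g i (x : ℕ), hgbound i (x : ℕ) x.isLt⟩ : Fin n) ≠
        ⟨g i (y : ℕ), hgbound i (y : ℕ) y.isLt⟩ := by
      intro h
      exact hgne (by simpa using congrArg Fin.val h)
    by_cases hi : (i : ℕ) = 0
    · have hx1 : (x : ℕ) < p 1 := by have := hp1eq i hi; have := x.isLt; omega
      have hy1 : (y : ℕ) < p 1 := by have := hp1eq i hi; have := y.isLt; omega
      rcases hcore i (x : ℕ) hx1 hi with ⟨h1, h2⟩ | ⟨h1, h2⟩ | ⟨h1, h2⟩ <;>
        rcases hcore i (y : ℕ) hy1 hi with ⟨h3, h4⟩ | ⟨h3, h4⟩ | ⟨h3, h4⟩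
      · exact Or.inl (Hgraph_adj.mpr ⟨hfne, Or.inl (by simpa [h2] using h1)⟩)
      · exact Or.inl (Hgraph_adj.mpr ⟨hfne, Or.inl (by simpa [h2] using h1)⟩)
      · exact Or.inl (Hgraph_adj.mpr ⟨hfne, Or.inl (by simpa [h2] using h1)⟩)
      · exact Or.inl (Hgraph_adj.mpr ⟨hfne, Or.inr (Or.inl (by simpa [h4] using h3))⟩)
      · exfalso; rw [h2, h4] at hgne; exact hgne rfl
      · -- u then v : the new edge
        refine Or.inr ?_
        rw [SimpleGraph.fromEdgeSet_adj]
        refine ⟨?_, hfne⟩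
        have e1 : (⟨g i (x : ℕ), hgbound i (x : ℕ) x.isLt⟩ : Fin n) = u := Fin.ext h2
        have e2 : (⟨g i (y : ℕ), hgbound i (y : ℕ) y.isLt⟩ : Fin n) = v := Fin.ext h4
        rw [e1, e2]
        exact rfl
      · exact Or.inl (Hgraph_adj.mpr ⟨hfne, Or.inr (Or.inl (by simpa [h4] using h3))⟩)
      · -- v then u : the new edge reversed
        refine Or.inr ?_
        rw [SimpleGraph.fromEdgeSet_adj]
        refine ⟨?_, hfne⟩
        have e1 : (⟨g i (x : ℕ), hgbound i (x : ℕ) x.isLt⟩ : Fin n) = v := Fin.ext h2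
        have e2 : (⟨g i (y : ℕ), hgbound i (y : ℕ) y.isLt⟩ : Fin n) = u := Fin.ext h4
        rw [e1, e2]
        exact Set.mem_singleton_iff.mpr Sym2.eq_swap
      · exfalso; rw [h2, h4] at hgne; exact hgne rfl
    · -- same block clique
      have h1 := hblk i (x : ℕ) x.isLt hi
      have h2 := hblk i (y : ℕ) y.isLt hi
      refine Or.inl (Hgraph_adj.mpr ⟨hfne, Or.inr (Or.inr ⟨(i : ℕ) + 1, by omega,
        by have := i.isLt; omega, ?_, ?_⟩)⟩)
      · exact (inBlock_iff p _ _).mpr ⟨h1.1,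
          show g i (x : ℕ) < blockStart p ((i : ℕ) + 1) + (p ((i : ℕ) + 1) + 1) by omega⟩
      · exact (inBlock_iff p _ _).mpr ⟨h2.1,
          show g i (y : ℕ) < blockStart p ((i : ℕ) + 1) + (p ((i : ℕ) + 1) + 1) by omega⟩

lemma fails_embeds (n t : ℕ) (p : ℕ → ℕ) (ht : 2 ≤ t) (hp1 : 2 ≤ p 1)
    (hmono : ∀ i j, 1 ≤ i → i ≤ j → j ≤ t → p i ≤ p j)
    (hfit : blockStart p (t + 1) + 1 ≤ n)
    (i0 : ℕ) (hi02 : 2 ≤ i0) (hi0t : i0 ≤ t - 1)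
    (hfail1 : ¬ (p i0 + p 1 ≤ p (i0 + 1))) (hfail2 : p (i0 + 1) ≠ p i0) :
    IsSubgraphOf (cliqueUnion t p) (Hgraph n t p) := by
  have hi0t' : i0 + 1 ≤ t := by omega
  have hple : p i0 ≤ p (i0 + 1) := hmono i0 (i0 + 1) (by omega) (by omega) hi0t'
  set d := p (i0 + 1) - p i0 with hd
  have hd1 : 1 ≤ d := by omega
  have hdp : d ≤ p 1 - 1 := by omega
  have hpe : p (i0 + 1) = p i0 + d := by omega
  have hS'e : blockStart p (i0 + 1) = blockStart p i0 + (p i0 + 1) := blockStart_succ p hi02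
  have hS2e : blockStart p (i0 + 1 + 1) = blockStart p (i0 + 1) + (p (i0 + 1) + 1) :=
    blockStart_succ p (by omega)
  have hS2n : blockStart p (i0 + 1 + 1) < n := by
    have := blockStart_mono_s3 p (show i0 + 1 + 1 ≤ t + 1 by omega)
    omega
  have hbs2 : p 1 - 2 ≤ blockStart p 2 := by rw [blockStart_two]
  have hbsi0 : blockStart p 2 ≤ blockStart p i0 := blockStart_mono_s3 p hi02
  have hcoren : p 1 - 2 < n := by
    have := blockStart_mono_s3 p (show 2 ≤ t + 1 by omega)
    omega
  have hblkfit : ∀ j, 2 ≤ j → j ≤ t → blockStart p j + p j + 1 ≤ n := by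
    intro j h2 h3
    have h4 : blockStart p (j + 1) ≤ blockStart p (t + 1) := blockStart_mono_s3 p (by omega)
    rw [blockStart_succ p h2] at h4
    omega
  set g : Fin t → ℕ → ℕ := fun i x =>
    if (i : ℕ) = 0 then
      (if x < d + 1 then blockStart p (i0 + 1) + p i0 + x else x - 2)
    else if (i : ℕ) + 1 = i0 then blockStart p (i0 + 1) + x
    else if (i : ℕ) + 1 = i0 + 1 then
      (if x < p i0 + 1 then blockStart p i0 + x else x - (p i0 + 1))
    else blockStart p ((i : ℕ) + 1) + x with hg
  -- full description of g
  have hval : ∀ (i : Fin t) (x : ℕ), x < p ((i : ℕ) + 1) →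
      ((i : ℕ) = 0 ∧ x < d + 1 ∧ g i x = blockStart p (i0 + 1) + p i0 + x ∧
        inBlock p (i0 + 1) (g i x)) ∨
      ((i : ℕ) = 0 ∧ d + 1 ≤ x ∧ x < p 1 ∧ g i x = x - 2 ∧ g i x < p 1 - 2) ∨
      ((i : ℕ) + 1 = i0 ∧ x < p i0 ∧ g i x = blockStart p (i0 + 1) + x ∧
        inBlock p (i0 + 1) (g i x)) ∨
      ((i : ℕ) + 1 = i0 + 1 ∧ x < p i0 + 1 ∧ g i x = blockStart p i0 + x ∧
        inBlock p i0 (g i x)) ∨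
      ((i : ℕ) + 1 = i0 + 1 ∧ p i0 + 1 ≤ x ∧ x < p i0 + d ∧ g i x = x - (p i0 + 1) ∧
        g i x < d - 1 ∧ g i x < p 1 - 2) ∨
      ((i : ℕ) ≠ 0 ∧ (i : ℕ) + 1 ≠ i0 ∧ (i : ℕ) + 1 ≠ i0 + 1 ∧
        g i x = blockStart p ((i : ℕ) + 1) + x ∧ inBlock p ((i : ℕ) + 1) (g i x)) := by
    intro i x hx
    by_cases h1 : (i : ℕ) = 0
    · have hx1 : x < p 1 := by
        have : p ((i : ℕ) + 1) = p 1 := by rw [h1]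
        omega
      by_cases h2 : x < d + 1
      · refine Or.inl ⟨h1, h2, ?_, ?_⟩
        · simp only [hg, if_pos h1, if_pos h2]
        · simp only [hg, if_pos h1, if_pos h2]
          exact (inBlock_iff p _ _).mpr ⟨by omega, by omega⟩
      · refine Or.inr (Or.inl ⟨h1, by omega, hx1, ?_, ?_⟩)
        · simp only [hg, if_pos h1, if_neg h2]
        · simp only [hg, if_pos h1, if_neg h2]
          omega
    · by_cases h2 : (i : ℕ) + 1 = i0
      · refine Or.inr (Or.inr (Or.inl ⟨h2, by rw [← h2]; omega, ?_, ?_⟩))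
        · simp only [hg, if_neg h1, if_pos h2]
        · simp only [hg, if_neg h1, if_pos h2]
          refine (inBlock_iff p _ _).mpr ⟨by omega, ?_⟩
          have : x < p i0 := by rw [← h2]; omega
          omega
      · by_cases h3 : (i : ℕ) + 1 = i0 + 1
        · have hx' : x < p i0 + d := by rw [← hpe, ← h3]; omega
          by_cases h4 : x < p i0 + 1
          · refine Or.inr (Or.inr (Or.inr (Or.inl ⟨h3, h4, ?_, ?_⟩)))
            · simp only [hg, if_neg h1, if_neg h2, if_pos h3, if_pos h4]
            · simp only [hg, if_neg h1, if_neg h2, if_pos h3, if_pos h4]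
              exact (inBlock_iff p _ _).mpr ⟨by omega, by omega⟩
          · refine Or.inr (Or.inr (Or.inr (Or.inr (Or.inl ⟨h3, by omega, hx', ?_, ?_, ?_⟩))))
            · simp only [hg, if_neg h1, if_neg h2, if_pos h3, if_neg h4]
            · simp only [hg, if_neg h1, if_neg h2, if_pos h3, if_neg h4]
              omega
            · simp only [hg, if_neg h1, if_neg h2, if_pos h3, if_neg h4]
              omega
        · refine Or.inr (Or.inr (Or.inr (Or.inr (Or.inr ⟨h1, h2, h3, ?_, ?_⟩))))
          · simp only [hg, if_neg h1, if_neg h2, if_neg h3]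
          · simp only [hg, if_neg h1, if_neg h2, if_neg h3]
            exact (inBlock_iff p _ _).mpr ⟨by omega, by omega⟩
  -- separation of regions
  have hsep : ∀ (r r' val val' : ℕ),
      (r = 0 ∧ val < p 1 - 2 ∨ (2 ≤ r ∧ r ≤ t ∧ inBlock p r val)) →
      (r' = 0 ∧ val' < p 1 - 2 ∨ (2 ≤ r' ∧ r' ≤ t ∧ inBlock p r' val')) →
      val = val' → r = r' := by
    rintro r r' val val' (⟨rfl, h1⟩ | ⟨h1, h2, h3⟩) (⟨rfl, h4⟩ | ⟨h4, h5, h6⟩) he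
    · rfl
    · exfalso
      have := (inBlock_iff p _ _).mp h6
      have := blockStart_mono_s3 p h4
      omega
    · exfalso
      have := (inBlock_iff p _ _).mp h3
      have := blockStart_mono_s3 p h1
      omega
    · exact inBlock_unique p h1 h4 h3 (he ▸ h6)
  have hgbound : ∀ (i : Fin t) (x : ℕ), x < p ((i : ℕ) + 1) → g i x < n := by
    intro i x hx
    have hit : (i : ℕ) + 1 ≤ t := by have := i.isLt; omega
    rcases hval i x hx with ⟨_, h2, h3, _⟩ | ⟨_, _, _, _, h5⟩ | ⟨_, h2, h3, _⟩ |
        ⟨_, h2, h3, _⟩ | ⟨_, _, _, _, _, h6⟩ | ⟨_, _, _, h4, _⟩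
    · omega
    · omega
    · omega
    · omega
    · omega
    · have := hblkfit ((i : ℕ) + 1) (by omega) hit
      omega
  have hginj : ∀ (i i' : Fin t) (x y : ℕ), x < p ((i : ℕ) + 1) → y < p ((i' : ℕ) + 1) →
      g i x = g i' y → (i : ℕ) = (i' : ℕ) ∧ x = y := by
    intro i i' x y hx hy he
    have hit : (i : ℕ) + 1 ≤ t := by have := i.isLt; omega
    have hit' : (i' : ℕ) + 1 ≤ t := by have := i'.isLt; omega
    rcases hval i x hx with ⟨e1, e2, e3, e4⟩ | ⟨e1, e2, e2', e3, e4⟩ | ⟨e1, e2, e3, e4⟩ |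
        ⟨e1, e2, e3, e4⟩ | ⟨e1, e2, e2', e3, e4, e4'⟩ | ⟨e1, e1', e1'', e3, e4⟩ <;>
      rcases hval i' y hy with ⟨f1, f2, f3, f4⟩ | ⟨f1, f2, f2', f3, f4⟩ | ⟨f1, f2, f3, f4⟩ |
        ⟨f1, f2, f3, f4⟩ | ⟨f1, f2, f2', f3, f4, f4'⟩ | ⟨f1, f1', f1'', f3, f4⟩
    -- cat1 vs *
    · exact ⟨by omega, by omega⟩
    · exact absurd (hsep (i0 + 1) 0 _ _ (Or.inr ⟨by omega, by omega, e4⟩)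
        (Or.inl ⟨rfl, f4⟩) he) (by omega)
    · exact ⟨by omega, by omega⟩
    · exact absurd (hsep (i0 + 1) i0 _ _ (Or.inr ⟨by omega, by omega, e4⟩)
        (Or.inr ⟨by omega, by omega, f4⟩) he) (by omega)
    · exact absurd (hsep (i0 + 1) 0 _ _ (Or.inr ⟨by omega, by omega, e4⟩)
        (Or.inl ⟨rfl, f4'⟩) he) (by omega)
    · exact absurd (hsep (i0 + 1) ((i' : ℕ) + 1) _ _ (Or.inr ⟨by omega, by omega, e4⟩)
        (Or.inr ⟨by omega, by omega, f4⟩) he) (by omega)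
    -- cat2 vs *
    · exact absurd (hsep 0 (i0 + 1) _ _ (Or.inl ⟨rfl, e4⟩)
        (Or.inr ⟨by omega, by omega, f4⟩) he) (by omega)
    · exact ⟨by omega, by omega⟩
    · exact absurd (hsep 0 (i0 + 1) _ _ (Or.inl ⟨rfl, e4⟩)
        (Or.inr ⟨by omega, by omega, f4⟩) he) (by omega)
    · exact absurd (hsep 0 i0 _ _ (Or.inl ⟨rfl, e4⟩)
        (Or.inr ⟨by omega, by omega, f4⟩) he) (by omega)
    · exact ⟨by omega, by omega⟩
    · exact absurd (hsep 0 ((i' : ℕ) + 1) _ _ (Or.inl ⟨rfl, e4⟩)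
        (Or.inr ⟨by omega, by omega, f4⟩) he) (by omega)
    -- cat3 vs *
    · exact ⟨by omega, by omega⟩
    · exact absurd (hsep (i0 + 1) 0 _ _ (Or.inr ⟨by omega, by omega, e4⟩)
        (Or.inl ⟨rfl, f4⟩) he) (by omega)
    · exact ⟨by omega, by omega⟩
    · exact absurd (hsep (i0 + 1) i0 _ _ (Or.inr ⟨by omega, by omega, e4⟩)
        (Or.inr ⟨by omega, by omega, f4⟩) he) (by omega)
    · exact absurd (hsep (i0 + 1) 0 _ _ (Or.inr ⟨by omega, by omega, e4⟩)
        (Or.inl ⟨rfl, f4'⟩) he) (by omega)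
    · exact absurd (hsep (i0 + 1) ((i' : ℕ) + 1) _ _ (Or.inr ⟨by omega, by omega, e4⟩)
        (Or.inr ⟨by omega, by omega, f4⟩) he) (by omega)
    -- cat4 vs *
    · exact absurd (hsep i0 (i0 + 1) _ _ (Or.inr ⟨by omega, by omega, e4⟩)
        (Or.inr ⟨by omega, by omega, f4⟩) he) (by omega)
    · exact absurd (hsep i0 0 _ _ (Or.inr ⟨by omega, by omega, e4⟩)
        (Or.inl ⟨rfl, f4⟩) he) (by omega)
    · exact absurd (hsep i0 (i0 + 1) _ _ (Or.inr ⟨by omega, by omega, e4⟩)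
        (Or.inr ⟨by omega, by omega, f4⟩) he) (by omega)
    · exact ⟨by omega, by omega⟩
    · exact absurd (hsep i0 0 _ _ (Or.inr ⟨by omega, by omega, e4⟩)
        (Or.inl ⟨rfl, f4'⟩) he) (by omega)
    · exact absurd (hsep i0 ((i' : ℕ) + 1) _ _ (Or.inr ⟨by omega, by omega, e4⟩)
        (Or.inr ⟨by omega, by omega, f4⟩) he) (by omega)
    -- cat5 vs *
    · exact absurd (hsep 0 (i0 + 1) _ _ (Or.inl ⟨rfl, e4'⟩)
        (Or.inr ⟨by omega, by omega, f4⟩) he) (by omega)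
    · exact ⟨by omega, by omega⟩
    · exact absurd (hsep 0 (i0 + 1) _ _ (Or.inl ⟨rfl, e4'⟩)
        (Or.inr ⟨by omega, by omega, f4⟩) he) (by omega)
    · exact absurd (hsep 0 i0 _ _ (Or.inl ⟨rfl, e4'⟩)
        (Or.inr ⟨by omega, by omega, f4⟩) he) (by omega)
    · exact ⟨by omega, by omega⟩
    · exact absurd (hsep 0 ((i' : ℕ) + 1) _ _ (Or.inl ⟨rfl, e4'⟩)
        (Or.inr ⟨by omega, by omega, f4⟩) he) (by omega)
    -- cat6 vs *
    · exact absurd (hsep ((i : ℕ) + 1) (i0 + 1) _ _ (Or.inr ⟨by omega, by omega, e4⟩)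
        (Or.inr ⟨by omega, by omega, f4⟩) he) (by omega)
    · exact absurd (hsep ((i : ℕ) + 1) 0 _ _ (Or.inr ⟨by omega, by omega, e4⟩)
        (Or.inl ⟨rfl, f4⟩) he) (by omega)
    · exact absurd (hsep ((i : ℕ) + 1) (i0 + 1) _ _ (Or.inr ⟨by omega, by omega, e4⟩)
        (Or.inr ⟨by omega, by omega, f4⟩) he) (by omega)
    · exact absurd (hsep ((i : ℕ) + 1) i0 _ _ (Or.inr ⟨by omega, by omega, e4⟩)
        (Or.inr ⟨by omega, by omega, f4⟩) he) (by omega)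
    · exact absurd (hsep ((i : ℕ) + 1) 0 _ _ (Or.inr ⟨by omega, by omega, e4⟩)
        (Or.inl ⟨rfl, f4'⟩) he) (by omega)
    · have hii : (i : ℕ) + 1 = (i' : ℕ) + 1 :=
        hsep ((i : ℕ) + 1) ((i' : ℕ) + 1) _ _ (Or.inr ⟨by omega, by omega, e4⟩)
          (Or.inr ⟨by omega, by omega, f4⟩) he
      have hbb : blockStart p ((i : ℕ) + 1) = blockStart p ((i' : ℕ) + 1) := by rw [hii]
      exact ⟨by omega, by omega⟩
  refine ⟨fun a => ⟨g a.1 (a.2 : ℕ), hgbound a.1 (a.2 : ℕ) a.2.isLt⟩, ?_, ?_⟩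
  · rintro ⟨i, x⟩ ⟨i', y⟩ hab
    have hvaleq : g i (x : ℕ) = g i' (y : ℕ) := by
      simpa using congrArg Fin.val hab
    obtain ⟨h1, h2⟩ := hginj i i' (x : ℕ) (y : ℕ) x.isLt y.isLt hvaleq
    have : i = i' := Fin.ext h1
    subst this
    exact congrArg (Sigma.mk i) (Fin.ext h2)
  · rintro ⟨i, x⟩ ⟨i', y⟩ ⟨hab, hii⟩
    obtain rfl : i = i' := hii
    have hgne : g i (x : ℕ) ≠ g i (y : ℕ) := by
      intro h
      obtain ⟨-, h2⟩ := hginj i i (x : ℕ) (y : ℕ) x.isLt y.isLt h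
      exact hab (congrArg (Sigma.mk i) (Fin.ext h2))
    show (Hgraph n t p).Adj
      ⟨g i (x : ℕ), hgbound i (x : ℕ) x.isLt⟩ ⟨g i (y : ℕ), hgbound i (y : ℕ) y.isLt⟩
    have hfne : (⟨g i (x : ℕ), hgbound i (x : ℕ) x.isLt⟩ : Fin n) ≠
        ⟨g i (y : ℕ), hgbound i (y : ℕ) y.isLt⟩ := by
      intro h
      exact hgne (by simpa using congrArg Fin.val h)
    refine Hgraph_adj.mpr ⟨hfne, ?_⟩
    rcases hval i (x : ℕ) x.isLt with ⟨e1, e2, e3, e4⟩ | ⟨e1, e2, e2', e3, e4⟩ |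
        ⟨e1, e2, e3, e4⟩ | ⟨e1, e2, e3, e4⟩ | ⟨e1, e2, e2', e3, e4, e4'⟩ |
        ⟨e1, e1', e1'', e3, e4⟩ <;>
      rcases hval i (y : ℕ) y.isLt with ⟨f1, f2, f3, f4⟩ | ⟨f1, f2, f2', f3, f4⟩ |
        ⟨f1, f2, f3, f4⟩ | ⟨f1, f2, f3, f4⟩ | ⟨f1, f2, f2', f3, f4, f4'⟩ |
        ⟨f1, f1', f1'', f3, f4⟩ <;>
      first
      | exact Or.inl (show g i (x : ℕ) < p 1 - 2 by omega)
      | exact Or.inr (Or.inl (show g i (y : ℕ) < p 1 - 2 by omega))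
      | exact Or.inr (Or.inr ⟨i0 + 1, by omega, by omega, e4, f4⟩)
      | exact Or.inr (Or.inr ⟨i0, by omega, by omega, e4, f4⟩)
      | exact Or.inr (Or.inr ⟨(i : ℕ) + 1, by omega, by omega, e4, f4⟩)
      | exact absurd (by omega : (0 : ℕ) = 1) (by omega)

lemma no_embed (n t : ℕ) (p : ℕ → ℕ) (ht : 2 ≤ t) (hp1 : 2 ≤ p 1)
    (hmono : ∀ i j, 1 ≤ i → i ≤ j → j ≤ t → p i ≤ p j)
    (hfit : blockStart p (t + 1) + 1 ≤ n)
    (hcond : ∀ i, 2 ≤ i → i ≤ t - 1 → (p i + p 1 ≤ p (i + 1) ∨ p (i + 1) = p i)) :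
    ¬ IsSubgraphOf (cliqueUnion t p) (Hgraph n t p) := by
  rintro ⟨f, hinj, hadj⟩
  classical
  -- clique images
  set F : Fin t → Finset (Fin n) :=
    fun i => Finset.univ.image (fun x : Fin (p ((i : ℕ) + 1)) => f ⟨i, x⟩) with hF
  have hFcard : ∀ i, (F i).card = p ((i : ℕ) + 1) := by
    intro i
    rw [hF]
    rw [Finset.card_image_of_injective _ (fun x y h => by simpa using hinj h)]
    simp
  have hFdisj : ∀ i i' : Fin t, i ≠ i' → Disjoint (F i) (F i') := by
    intro i i' hii
    rw [Finset.disjoint_left]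
    rintro w hw hw'
    rw [hF] at hw hw'
    simp only [Finset.mem_image, Finset.mem_univ, true_and] at hw hw'
    obtain ⟨x, hx⟩ := hw
    obtain ⟨y, hy⟩ := hw'
    exact hii (congrArg Sigma.fst (hinj (hx.trans hy.symm)))
  set coreS : Finset (Fin n) := Finset.univ.filter (fun w => (w : ℕ) < p 1 - 2) with hcoreS
  have hcoreS_card : coreS.card ≤ p 1 - 2 := by
    have h1 : coreS.card ≤ (Finset.range (p 1 - 2)).card := by
      apply Finset.card_le_card_of_injOn (fun w : Fin n => (w : ℕ))
      · intro w hw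
        rw [hcoreS] at hw
        simp only [Finset.mem_coe, Finset.mem_filter] at hw
        exact Finset.mem_range.mpr hw.2
      · intro w _ w' _ h
        exact Fin.ext h
    simpa using h1
  set blockS : ℕ → Finset (Fin n) := fun m => Finset.univ.filter
    (fun w => blockStart p m ≤ (w : ℕ) ∧ (w : ℕ) < blockStart p m + (p m + 1)) with hblockS
  have hblockS_card : ∀ m, (blockS m).card ≤ p m + 1 := by
    intro m
    have h1 : (blockS m).card ≤
        (Finset.Ico (blockStart p m) (blockStart p m + (p m + 1))).card := by
      apply Finset.card_le_card_of_injOn (fun w : Fin n => (w : ℕ))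
      · intro w hw
        rw [hblockS] at hw
        simp only [Finset.mem_coe, Finset.mem_filter] at hw
        exact Finset.mem_Ico.mpr hw.2
      · intro w _ w' _ h
        exact Fin.ext h
    simpa using h1
  have hcc_le : ∀ i : Fin t, (F i ∩ coreS).card ≤ p 1 - 2 :=
    fun i => le_trans (Finset.card_le_card Finset.inter_subset_right) hcoreS_card
  have hp_ge : ∀ i : Fin t, p 1 ≤ p ((i : ℕ) + 1) :=
    fun i => hmono 1 ((i : ℕ) + 1) le_rfl (by omega) (by have := i.isLt; omega)
  have hnc2 : ∀ i : Fin t, 2 ≤ (F i \ coreS).card := by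
    intro i
    have h1 := Finset.card_sdiff_add_card_inter (F i) coreS
    have h2 := hFcard i
    have h3 := hcc_le i
    have h4 := hp_ge i
    omega
  have hnoncore_adj : ∀ w w' : Fin n, w ∉ coreS → w' ∉ coreS → (Hgraph n t p).Adj w w' →
      ∃ m, 2 ≤ m ∧ m ≤ t ∧ inBlock p m (w : ℕ) ∧ inBlock p m (w' : ℕ) := by
    intro w w' hw hw' hadj'
    rw [Hgraph_adj] at hadj'
    rw [hcoreS] at hw hw'
    simp only [Finset.mem_filter, Finset.mem_univ, true_and, not_lt] at hw hw'
    rcases hadj'.2 with h | h | h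
    · exact absurd h (not_lt.mpr hw)
    · exact absurd h (not_lt.mpr hw')
    · exact h
  have hij_adj : ∀ (i : Fin t) (x y : Fin (p ((i : ℕ) + 1))), f ⟨i, x⟩ ≠ f ⟨i, y⟩ →
      (Hgraph n t p).Adj (f ⟨i, x⟩) (f ⟨i, y⟩) := by
    intro i x y hnexy
    exact hadj _ _ ⟨fun h => hnexy (congrArg f h), rfl⟩
  have hBex : ∀ i : Fin t, ∃ m, 2 ≤ m ∧ m ≤ t ∧
      ∀ w ∈ F i \ coreS, inBlock p m (w : ℕ) := by
    intro i
    obtain ⟨w1, hw1, w2, hw2, hww⟩ := Finset.one_lt_card.mp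
      (lt_of_lt_of_le one_lt_two (hnc2 i))
    have hw1nc : w1 ∉ coreS := (Finset.mem_sdiff.mp hw1).2
    have hw2nc : w2 ∉ coreS := (Finset.mem_sdiff.mp hw2).2
    have hFadj : ∀ w w' : Fin n, w ∈ F i → w' ∈ F i → w ≠ w' →
        (Hgraph n t p).Adj w w' := by
      intro w w' hwF hwF' hne
      rw [hF] at hwF hwF'
      simp only [Finset.mem_image, Finset.mem_univ, true_and] at hwF hwF'
      obtain ⟨x1, hx1⟩ := hwF
      obtain ⟨x2, hx2⟩ := hwF'
      rw [← hx1, ← hx2]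
      exact hij_adj i x1 x2 (by rw [hx1, hx2]; exact hne)
    obtain ⟨m, hm1, hm2, hm3, hm4⟩ := hnoncore_adj w1 w2 hw1nc hw2nc
      (hFadj w1 w2 (Finset.mem_sdiff.mp hw1).1 (Finset.mem_sdiff.mp hw2).1 hww)
    refine ⟨m, hm1, hm2, ?_⟩
    intro w hw
    by_cases hww1 : w = w1
    · rw [hww1]; exact hm3
    · have hwnc := (Finset.mem_sdiff.mp hw).2
      obtain ⟨m', hm1', hm2', hm3', hm4'⟩ := hnoncore_adj w w1 hwnc hw1nc
        (hFadj w w1 (Finset.mem_sdiff.mp hw).1 (Finset.mem_sdiff.mp hw1).1 hww1)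
      have hmm : m' = m := inBlock_unique p hm1' hm1 hm4' hm3
      rw [← hmm]; exact hm3'
  choose B hB1 hB2 hB3 using hBex
  have hcapB : ∀ m, 2 ≤ m → m ≤ t →
      ∑ i ∈ Finset.univ.filter (fun i : Fin t => B i = m),
        (p ((i : ℕ) + 1) - (F i ∩ coreS).card) ≤ p m + 1 := by
    intro m hm1 hm2
    have hsum_eq : ∑ i ∈ Finset.univ.filter (fun i : Fin t => B i = m),
        (p ((i : ℕ) + 1) - (F i ∩ coreS).card)
        = ∑ i ∈ Finset.univ.filter (fun i : Fin t => B i = m), (F i \ coreS).card := by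
      apply Finset.sum_congr rfl
      intro i _
      have h1 := Finset.card_sdiff_add_card_inter (F i) coreS
      have h2 := hFcard i
      omega
    rw [hsum_eq]
    have hdisj : ∀ i ∈ Finset.univ.filter (fun i : Fin t => B i = m),
        ∀ i' ∈ Finset.univ.filter (fun i : Fin t => B i = m), i ≠ i' →
        Disjoint (F i \ coreS) (F i' \ coreS) := fun i _ i' _ hii =>
      Finset.disjoint_of_subset_left Finset.sdiff_subset
        (Finset.disjoint_of_subset_right Finset.sdiff_subset (hFdisj i i' hii))
    calc ∑ i ∈ Finset.univ.filter (fun i : Fin t => B i = m), (F i \ coreS).card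
        = ((Finset.univ.filter (fun i : Fin t => B i = m)).biUnion
            (fun i => F i \ coreS)).card := (Finset.card_biUnion hdisj).symm
      _ ≤ (blockS m).card := ?_
      _ ≤ p m + 1 := hblockS_card m
    apply Finset.card_le_card
    intro w hw
    rw [Finset.mem_biUnion] at hw
    obtain ⟨i, hi, hwi⟩ := hw
    have hin := hB3 i w hwi
    have hBi : B i = m := (Finset.mem_filter.mp hi).2
    rw [hblockS]
    simp only [Finset.mem_filter, Finset.mem_univ, true_and]
    rw [← hBi]
    exact (inBlock_iff p _ _).mp hin
  have hcsum : ∑ i : Fin t, (F i ∩ coreS).card ≤ p 1 - 2 := by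
    have hdisj : ∀ i ∈ (Finset.univ : Finset (Fin t)), ∀ i' ∈ Finset.univ, i ≠ i' →
        Disjoint (F i ∩ coreS) (F i' ∩ coreS) := fun i _ i' _ hii =>
      Finset.disjoint_of_subset_left Finset.inter_subset_left
        (Finset.disjoint_of_subset_right Finset.inter_subset_left (hFdisj i i' hii))
    calc ∑ i : Fin t, (F i ∩ coreS).card
        = (Finset.univ.biUnion (fun i => F i ∩ coreS)).card := (Finset.card_biUnion hdisj).symm
      _ ≤ coreS.card := Finset.card_le_card (fun w hw => by
          rw [Finset.mem_biUnion] at hw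
          obtain ⟨i, _, hwi⟩ := hw
          exact Finset.mem_of_mem_inter_right hwi)
      _ ≤ p 1 - 2 := hcoreS_card
  -- transfer to ℕ-indexed data and apply no_packing
  set bf : ℕ → ℕ := fun j => if h : 1 ≤ j ∧ j ≤ t then B ⟨j - 1, by omega⟩ else 2 with hbf
  set cfn : ℕ → ℕ := fun j =>
    if h : 1 ≤ j ∧ j ≤ t then (F ⟨j - 1, by omega⟩ ∩ coreS).card else 0 with hcfn
  have hbf_eq : ∀ i : Fin t, bf ((i : ℕ) + 1) = B i := by
    intro i
    have h : 1 ≤ (i : ℕ) + 1 ∧ (i : ℕ) + 1 ≤ t := ⟨by omega, by have := i.isLt; omega⟩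
    rw [hbf]
    simp only [dif_pos h]
    first
    | rfl
    | (congr 1; exact Fin.ext (by omega))
  have hcfn_eq : ∀ i : Fin t, cfn ((i : ℕ) + 1) = (F i ∩ coreS).card := by
    intro i
    have h : 1 ≤ (i : ℕ) + 1 ∧ (i : ℕ) + 1 ≤ t := ⟨by omega, by have := i.isLt; omega⟩
    rw [hcfn]
    simp only [dif_pos h]
    first
    | rfl
    | (congr 2; exact Fin.ext (by omega))
  have hsummem : ∀ j ∈ Finset.Icc 1 t, 1 ≤ j ∧ j ≤ t := by
    intro j hj
    exact Finset.mem_Icc.mp hj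
  apply no_packing p hp1 t (by omega) hmono
    (fun i h1 h2 => hcond i h1 (by omega)) bf cfn
  · intro j h1 h2
    rw [hbf]
    simp only [dif_pos (show 1 ≤ j ∧ j ≤ t from ⟨h1, h2⟩)]
    exact ⟨hB1 _, hB2 _⟩
  · have he : ∑ j ∈ Finset.Icc 1 t, cfn j = ∑ i : Fin t, (F i ∩ coreS).card := by
      refine Finset.sum_bij'
        (fun a ha => (⟨a - 1, by have := hsummem a ha; omega⟩ : Fin t))
        (fun i _ => (i : ℕ) + 1) ?_ ?_ ?_ ?_ ?_
      · intro a ha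
        exact Finset.mem_univ _
      · intro i _
        show (i : ℕ) + 1 ∈ Finset.Icc 1 t
        exact Finset.mem_Icc.mpr ⟨by omega, by have := i.isLt; omega⟩
      · intro a ha
        show a - 1 + 1 = a
        have := hsummem a ha
        omega
      · intro i _
        exact Fin.ext (show (i : ℕ) + 1 - 1 = (i : ℕ) by omega)
      · intro a ha
        have ha' := hsummem a ha
        have h1 := hcfn_eq (⟨a - 1, by omega⟩ : Fin t)
        have h2 : ((⟨a - 1, by omega⟩ : Fin t) : ℕ) + 1 = a := by
          show a - 1 + 1 = a
          omega
        rw [h2] at h1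
        exact h1
    rw [he]
    exact hcsum
  · intro m hm1 hm2
    have he : ∑ j ∈ (Finset.Icc 1 t).filter (fun j => bf j = m), (p j - cfn j)
        = ∑ i ∈ Finset.univ.filter (fun i : Fin t => B i = m),
          (p ((i : ℕ) + 1) - (F i ∩ coreS).card) := by
      refine Finset.sum_bij'
        (fun a ha => (⟨a - 1, by
          have := hsummem a (Finset.mem_filter.mp ha).1; omega⟩ : Fin t))
        (fun i _ => (i : ℕ) + 1) ?_ ?_ ?_ ?_ ?_
      · intro a ha
        have ha1 := hsummem a (Finset.mem_filter.mp ha).1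
        have ha2 := (Finset.mem_filter.mp ha).2
        refine Finset.mem_filter.mpr ⟨Finset.mem_univ _, ?_⟩
        have hb2 : bf a = B ⟨a - 1, by omega⟩ :=
          dif_pos (show 1 ≤ a ∧ a ≤ t from ha1)
        exact hb2.symm.trans ha2
      · intro i hi
        show (i : ℕ) + 1 ∈ (Finset.Icc 1 t).filter (fun j => bf j = m)
        refine Finset.mem_filter.mpr ⟨Finset.mem_Icc.mpr
          ⟨by omega, by have := i.isLt; omega⟩, ?_⟩
        rw [hbf_eq i]
        exact (Finset.mem_filter.mp hi).2
      · intro a ha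
        show a - 1 + 1 = a
        have := hsummem a (Finset.mem_filter.mp ha).1
        omega
      · intro i _
        exact Fin.ext (show (i : ℕ) + 1 - 1 = (i : ℕ) by omega)
      · intro a ha
        have ha' := hsummem a (Finset.mem_filter.mp ha).1
        have h1 := hcfn_eq (⟨a - 1, by omega⟩ : Fin t)
        have h2 : ((⟨a - 1, by omega⟩ : Fin t) : ℕ) + 1 = a := by
          show a - 1 + 1 = a
          omega
        rw [h2] at h1
        rw [h1, h2]
    rw [he]
    exact hcapB m hm1 hm2

/-- `H(n; p₁, …, p_t)` is `(K_{p₁} ∪ ⋯ ∪ K_{p_t})`-saturated iff for every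
`2 ≤ i ≤ t-1`, either `p_{i+1} - p_i ≥ p₁` or `p_{i+1} = p_i`. -/
theorem Hgraph_saturated_iff (n t : ℕ) (p : ℕ → ℕ) (ht : 2 ≤ t) (hp1 : 2 ≤ p 1)
    (hmono : ∀ i j, 1 ≤ i → i ≤ j → j ≤ t → p i ≤ p j)
    (hfit : blockStart p (t + 1) + 1 ≤ n) :
    IsSat (Hgraph n t p) (cliqueUnion t p) ↔
      ∀ i, 2 ≤ i → i ≤ t - 1 → (p i + p 1 ≤ p (i + 1) ∨ p (i + 1) = p i) := by
  constructor
  · intro hsat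
    by_contra hc
    push_neg at hc
    obtain ⟨i0, h1, h2, h3, h4⟩ := hc
    exact hsat.1 (fails_embeds n t p ht hp1 hmono hfit i0 h1 h2 (by omega) h4)
  · intro hcond
    exact ⟨no_embed n t p ht hp1 hmono hfit hcond,
      fun u v hne hna => addEdge_embeds n t p ht hp1 hmono hfit u v hne hna⟩
end

section
/- Suppose t ≥ 2, n > 3(p_1 - 2) + Σ_{i=2}^t p_i(p_i + 1), G is a (K_{p_1} ∪ ... ∪ K_{p_t})-saturated graph of order n with e(G) ≤ e(H(n; p_1, ..., p_t)), and v is a vertex of minimum degree in G. Then d_G(v) = p_1 - 2. -/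
open SimpleGraph Finset

/-- Edge count bound for `Hgraph`. -/
lemma Hcount (n t : ℕ) (p : ℕ → ℕ) (hq : p 1 - 2 < n) :
    2 * (Hgraph n t p).edgeSet.ncard + (p 1 - 2) * (p 1 - 2 + 1)
      ≤ 2 * ((p 1 - 2) * n) + ∑ i ∈ Finset.Icc 2 t, p i * (p i + 1) := by
  classical
  set q := p 1 - 2 with hqdef
  have hnc : (Hgraph n t p).edgeSet.ncard = #(Hgraph n t p).edgeFinset := by
    rw [← coe_edgeFinset, Set.ncard_coe_finset]
  have hdart : 2 * #(Hgraph n t p).edgeFinset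
      = #(univ.filter fun x : Fin n × Fin n => (Hgraph n t p).Adj x.1 x.2) := by
    rw [← dart_card_eq_twice_card_edges, ← Fintype.card_subtype]
    exact Fintype.card_congr ⟨fun d => ⟨d.toProd, d.adj⟩, fun x => ⟨x.1, x.2⟩,
      fun d => by cases d; rfl, fun x => by cases x; rfl⟩
  set F1 : Finset (Fin n × Fin n) :=
    univ.filter (fun x => x.1 ≠ x.2 ∧ (x.1 : ℕ) < q) with hF1def
  set F2 : Finset (Fin n × Fin n) :=
    univ.filter (fun x => x.1 ≠ x.2 ∧ ¬ ((x.1 : ℕ) < q) ∧ (x.2 : ℕ) < q) with hF2def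
  set F3 : ℕ → Finset (Fin n × Fin n) :=
    (fun i => univ.filter (fun x => x.1 ≠ x.2 ∧ inBlock p i (x.1 : ℕ) ∧ inBlock p i (x.2 : ℕ)))
    with hF3def
  have hcover : (univ.filter fun x : Fin n × Fin n => (Hgraph n t p).Adj x.1 x.2)
      ⊆ F1 ∪ F2 ∪ (Finset.Icc 2 t).biUnion F3 := by
    intro x hx
    simp only [mem_filter, mem_univ, true_and] at hx
    rw [Hgraph, fromRel_adj] at hx
    obtain ⟨hne, hr⟩ := hx
    simp only [hF1def, hF2def, hF3def, mem_union, mem_biUnion, mem_filter, mem_univ, true_and,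
      Finset.mem_Icc]
    by_cases h1 : (x.1 : ℕ) < q
    · exact Or.inl (Or.inl ⟨hne, h1⟩)
    · by_cases h2 : (x.2 : ℕ) < q
      · exact Or.inl (Or.inr ⟨hne, h1, h2⟩)
      · rcases hr with (hb | hb) | (hb | hb)
        · exact absurd hb h1
        · obtain ⟨i, hi2, hit, ha, hbk⟩ := hb
          exact Or.inr ⟨i, ⟨hi2, hit⟩, hne, ha, hbk⟩
        · exact absurd hb h2
        · obtain ⟨i, hi2, hit, ha, hbk⟩ := hb
          exact Or.inr ⟨i, ⟨hi2, hit⟩, hne, hbk, ha⟩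
  set S0 : Finset (Fin n) := univ.filter (fun a => (a : ℕ) < q) with hS0def
  have hS0 : #S0 = q := by
    have : S0 = Finset.Iio (⟨q, hq⟩ : Fin n) := by
      ext a; simp [hS0def, Fin.lt_def]
    rw [this, Fin.card_Iio]
  have hF1card : #F1 + q ≤ q * n := by
    have hsub : F1 ⊆ S0 ×ˢ univ := by
      intro x hx; simp only [hF1def, mem_filter, mem_univ, true_and] at hx
      simp [Finset.mem_product, hS0def, hx.2]
    have hdiag : S0.image (fun a => (a, a)) ⊆ S0 ×ˢ (univ : Finset (Fin n)) := by
      intro x hx; simp only [mem_image] at hx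
      obtain ⟨a, ha, rfl⟩ := hx
      simp [Finset.mem_product, ha]
    have hdisj : Disjoint F1 (S0.image fun a => (a, a)) := by
      rw [Finset.disjoint_left]
      intro x hx hx'
      simp only [hF1def, mem_filter, mem_univ, true_and] at hx
      simp only [mem_image] at hx'
      obtain ⟨a, _, rfl⟩ := hx'
      exact hx.1 rfl
    have hcard : #F1 + #(S0.image fun a => (a, a)) ≤ #(S0 ×ˢ (univ : Finset (Fin n))) := by
      rw [← Finset.card_union_of_disjoint hdisj]
      exact Finset.card_le_card (Finset.union_subset hsub hdiag)
    rw [Finset.card_image_of_injective _ (fun a b h => (Prod.mk.injEq _ _ _ _ ▸ h).1),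
      Finset.card_product, card_univ, Fintype.card_fin, hS0] at hcard
    exact hcard
  have hF2card : #F2 + q * q ≤ q * n := by
    have hsub : F2 ⊆ (univ.filter fun a : Fin n => ¬ ((a : ℕ) < q)) ×ˢ S0 := by
      intro x hx; simp only [hF2def, mem_filter, mem_univ, true_and] at hx
      simp only [Finset.mem_product, mem_filter, mem_univ, true_and, hS0def]
      exact ⟨hx.2.1, hx.2.2⟩
    have h2 := Finset.card_le_card hsub
    rw [Finset.card_product, hS0, Finset.filter_not, Finset.card_sdiff_of_subset (Finset.filter_subset _ _),
      card_univ, Fintype.card_fin, ← hS0def, hS0] at h2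
    calc #F2 + q * q ≤ (n - q) * q + q * q := by omega
    _ = ((n - q) + q) * q := by ring
    _ = n * q := by rw [Nat.sub_add_cancel hq.le]
    _ = q * n := Nat.mul_comm _ _
  have hF3card : ∀ i ∈ Finset.Icc 2 t, #(F3 i) ≤ p i * (p i + 1) := by
    intro i _
    set S : Finset (Fin n) := univ.filter (fun a => inBlock p i (a : ℕ)) with hSdef
    have hmem : ∀ a : Fin n, a ∈ S →
        blockStart p i ≤ (a : ℕ) ∧ (a : ℕ) < blockStart p i + (p i + 1) := by
      intro a ha
      rw [hSdef, Finset.mem_filter] at ha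
      exact ha.2
    have hm : #S ≤ p i + 1 := by
      have := Finset.card_le_card_of_injOn (f := fun a : Fin n => (a : ℕ) - blockStart p i)
        (t := Finset.range (p i + 1)) (s := S)
        (by intro a ha; have h := hmem a ha; simp; omega)
        (by intro a ha b hb hab
            have h1 := hmem a ha; have h2 := hmem b hb
            simp only at hab
            exact Fin.ext (by omega))
      simpa using this
    have hsub : F3 i ⊆ S.offDiag := by
      intro x hx
      simp only [hF3def, mem_filter, mem_univ, true_and] at hx
      rw [Finset.mem_offDiag]
      exact ⟨by simp [hSdef, hx.2.1], by simp [hSdef, hx.2.2], hx.1⟩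
    calc #(F3 i) ≤ #S.offDiag := Finset.card_le_card hsub
    _ = #S * #S - #S := by rw [Finset.offDiag_card]
    _ = #S * (#S - 1) := (Nat.mul_sub_one #S #S).symm
    _ ≤ (p i + 1) * p i := Nat.mul_le_mul hm (by omega)
    _ = p i * (p i + 1) := Nat.mul_comm _ _
  have hbi : #((Finset.Icc 2 t).biUnion F3) ≤ ∑ i ∈ Finset.Icc 2 t, p i * (p i + 1) :=
    le_trans Finset.card_biUnion_le (Finset.sum_le_sum hF3card)
  have htot := Finset.card_le_card hcover
  have h2 := le_trans htot (le_trans (Finset.card_union_le _ _)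
    (Nat.add_le_add_right (Finset.card_union_le F1 F2) _))
  have hqq : q * (q + 1) = q * q + q := by ring
  rw [hnc, hdart]
  omega

/-- Adjacency in `G ⊔ new edge` away from the new edge gives adjacency in `G`. -/
lemma transfer {n : ℕ} (G : SimpleGraph (Fin n)) (v u w w' : Fin n)
    (h : (G ⊔ SimpleGraph.fromEdgeSet {s(v,u)}).Adj w w')
    (h1 : w ≠ v ∨ w' ≠ u) (h2 : w ≠ u ∨ w' ≠ v) : G.Adj w w' := by
  rw [sup_adj, fromEdgeSet_adj] at h
  rcases h with h | ⟨h, _⟩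
  · exact h
  · rw [Set.mem_singleton_iff, Sym2.eq_iff] at h
    tauto

/-- Saturation gives, for each non-neighbor `u` of `v`, a clique of common neighbors. -/
lemma sat_clique {n t : ℕ} {p : ℕ → ℕ} (hp1 : 2 ≤ p 1)
    (hmono : ∀ i j, 1 ≤ i → i ≤ j → j ≤ t → p i ≤ p j)
    {G : SimpleGraph (Fin n)} (hsat : IsSat G (cliqueUnion t p))
    (v u : Fin n) (hne : v ≠ u) (hadj : ¬ G.Adj v u) :
    ∃ Q : Finset (Fin n), p 1 - 2 ≤ #Q ∧ (∀ w ∈ Q, G.Adj v w ∧ G.Adj u w) ∧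
      ∀ w ∈ Q, ∀ w' ∈ Q, w ≠ w' → G.Adj w w' := by
  classical
  obtain ⟨f, hinj, hhom⟩ := hsat.2 v u hne hadj
  have key : ∃ a b, (cliqueUnion t p).Adj a b ∧ f a = v ∧ f b = u := by
    by_contra hk
    push_neg at hk
    refine hsat.1 ⟨f, hinj, fun a b hab => ?_⟩
    refine transfer G v u _ _ (hhom a b hab) ?_ ?_
    · rcases Classical.em (f a = v) with h | h
      · exact Or.inr (hk a b hab h)
      · exact Or.inl h
    · rcases Classical.em (f b = v) with h' | h'
      · exact Or.inl (fun h => hk b a ((cliqueUnion t p).adj_symm hab) h' h)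
      · exact Or.inr h'
  obtain ⟨a, b, hab, hfa, hfb⟩ := key
  have hab' : a ≠ b ∧ a.1 = b.1 := hab
  obtain ⟨i, x⟩ := a
  obtain ⟨j, y⟩ := b
  obtain ⟨hne2, h1⟩ := hab'
  dsimp at h1
  subst h1
  have hxy : x ≠ y := fun h => hne2 (by rw [h])
  set g : Fin (p ((i : ℕ) + 1)) → Fin n := fun z => f ⟨i, z⟩ with hgdef
  have hmk : ∀ z1 z2 : Fin (p ((i : ℕ) + 1)),
      (⟨i, z1⟩ : Σ k : Fin t, Fin (p ((k : ℕ) + 1))) = ⟨i, z2⟩ → z1 = z2 := by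
    intro z1 z2 h
    cases h
    rfl
  have hginj : Function.Injective g := fun z1 z2 h => hmk _ _ (hinj h)
  refine ⟨((univ.erase x).erase y).image g, ?_, ?_, ?_⟩
  · rw [Finset.card_image_of_injective _ hginj,
      Finset.card_erase_of_mem (by simp [Finset.mem_erase, hxy.symm]),
      Finset.card_erase_of_mem (by simp), card_univ, Fintype.card_fin]
    have : p 1 ≤ p ((i : ℕ) + 1) := hmono 1 ((i : ℕ) + 1) le_rfl (by omega)
      (by have := i.isLt; omega)
    omega
  · intro w hw
    obtain ⟨z, hz, rfl⟩ := Finset.mem_image.mp hw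
    rw [Finset.mem_erase, Finset.mem_erase] at hz
    obtain ⟨hzy, hzx, -⟩ := hz
    have hwv : g z ≠ v := by rw [← hfa]; exact hinj.ne (fun h => hzx (hmk _ _ h))
    have hwu : g z ≠ u := by rw [← hfb]; exact hinj.ne (fun h => hzy (hmk _ _ h))
    constructor
    · have had : (cliqueUnion t p).Adj ⟨i, z⟩ ⟨i, x⟩ :=
        ⟨fun h => hzx (hmk _ _ h), rfl⟩
      have h5 := hhom _ _ had
      rw [hfa] at h5
      exact (transfer G v u _ _ h5 (Or.inl hwv) (Or.inl hwu)).symm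
    · have had : (cliqueUnion t p).Adj ⟨i, z⟩ ⟨i, y⟩ :=
        ⟨fun h => hzy (hmk _ _ h), rfl⟩
      have h5 := hhom _ _ had
      rw [hfb] at h5
      exact (transfer G v u _ _ h5 (Or.inl hwv) (Or.inl hwu)).symm
  · intro w hw w' hw' hww
    obtain ⟨z, hz, rfl⟩ := Finset.mem_image.mp hw
    obtain ⟨z', hz', rfl⟩ := Finset.mem_image.mp hw'
    rw [Finset.mem_erase, Finset.mem_erase] at hz hz'
    have hwv : g z ≠ v := by rw [← hfa]; exact hinj.ne (fun h => hz.2.1 (hmk _ _ h))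
    have hwu : g z ≠ u := by rw [← hfb]; exact hinj.ne (fun h => hz.1 (hmk _ _ h))
    have hzz : z ≠ z' := fun h => hww (by rw [h])
    have : (cliqueUnion t p).Adj ⟨i, z⟩ ⟨i, z'⟩ :=
      ⟨fun h => hzz (hmk _ _ h), rfl⟩
    exact transfer G v u _ _ (hhom _ _ this) (Or.inl hwv) (Or.inl hwu)

set_option maxHeartbeats 2000000 in
/-- In a saturated graph with few edges, the minimum degree is `p₁ - 2`. -/
theorem minDegree_eq (n t : ℕ) (p : ℕ → ℕ) (ht : 2 ≤ t) (hp1 : 2 ≤ p 1)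
    (hmono : ∀ i j, 1 ≤ i → i ≤ j → j ≤ t → p i ≤ p j)
    (hn : 3 * (p 1 - 2) + ∑ i ∈ Finset.Icc 2 t, p i * (p i + 1) < n)
    (G : SimpleGraph (Fin n)) (hsat : IsSat G (cliqueUnion t p))
    (hE : G.edgeSet.ncard ≤ (Hgraph n t p).edgeSet.ncard)
    (v : Fin n)
    (hmin : ∀ u, (G.neighborSet v).ncard ≤ (G.neighborSet u).ncard) :
    (G.neighborSet v).ncard = p 1 - 2 := by
  classical
  set q := p 1 - 2 with hqdef
  set T := ∑ i ∈ Finset.Icc 2 t, p i * (p i + 1) with hTdef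
  have hT2 : (q + 2) * (q + 3) ≤ T := by
    have hp2 : p 1 ≤ p 2 := hmono 1 2 le_rfl (by omega) ht
    have hT1 : p 2 * (p 2 + 1) ≤ T :=
      Finset.single_le_sum (f := fun i => p i * (p i + 1)) (fun i _ => Nat.zero_le _)
        (by simp only [Finset.mem_Icc]; omega)
    have h1 : q + 2 ≤ p 2 := by omega
    calc (q + 2) * (q + 3) ≤ p 2 * (p 2 + 1) := Nat.mul_le_mul h1 (by omega)
    _ ≤ T := hT1
  have hqn : q < n := by omega
  have hdeg : ∀ u, (G.neighborSet u).ncard = G.degree u := by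
    intro u
    rw [Set.ncard_eq_toFinset_card', Set.toFinset_card, card_neighborSet_eq_degree]
  have hHE : 2 * (Hgraph n t p).edgeSet.ncard + q * (q + 1) ≤ 2 * (q * n) + T :=
    Hcount n t p hqn
  have hEG : ∑ u, G.degree u = 2 * G.edgeSet.ncard := by
    rw [sum_degrees_eq_twice_card_edges, ← coe_edgeFinset, Set.ncard_coe_finset]
  have hkey : 2 * G.edgeSet.ncard + q * (q + 1) ≤ 2 * (q * n) + T := by omega
  set δ := G.degree v with hδdef
  have hδmin : ∀ u, δ ≤ G.degree u := by
    intro u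
    rw [hδdef, ← hdeg, ← hdeg]
    exact hmin u
  have havg : n * δ ≤ ∑ u, G.degree u := by
    calc n * δ = ∑ _u : Fin n, δ := by
          rw [Finset.sum_const, card_univ, Fintype.card_fin, smul_eq_mul]
    _ ≤ ∑ u, G.degree u := Finset.sum_le_sum (fun u _ => hδmin u)
  have hnonnbr : ∃ u, u ≠ v ∧ ¬ G.Adj v u := by
    by_contra hc
    push_neg at hc
    have hn1 : 1 ≤ n := by omega
    have hdegv : δ = n - 1 := by
      have h3 : G.neighborFinset v = univ.erase v := by
        ext u
        simp only [mem_neighborFinset, Finset.mem_erase, Finset.mem_univ, and_true]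
        exact ⟨fun h => h.ne', fun h => hc u h⟩
      rw [hδdef, SimpleGraph.degree, h3, Finset.card_erase_of_mem (Finset.mem_univ v),
        card_univ, Fintype.card_fin]
    have h1 : n * (n - 1) ≤ 2 * G.edgeSet.ncard := by
      rw [← hEG]; rw [hdegv] at havg; exact havg
    have h6 := hkey
    obtain ⟨n', rfl⟩ : ∃ n', n = n' + 1 := ⟨n - 1, by omega⟩
    simp only [Nat.add_sub_cancel] at h1
    zify at h1 h6 hn hT2
    nlinarith [mul_nonneg (by positivity : (0:ℤ) ≤ (T:ℤ)) (by nlinarith : (0:ℤ) ≤ (n':ℤ) - 1),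
      mul_nonneg (by positivity : (0:ℤ) ≤ (n':ℤ))
        (by nlinarith : (0:ℤ) ≤ (n':ℤ) - 3*(q:ℤ) - (T:ℤ)),
      mul_nonneg (by positivity : (0:ℤ) ≤ (q:ℤ)) (by positivity : (0:ℤ) ≤ (q:ℤ)),
      mul_nonneg (by positivity : (0:ℤ) ≤ (q:ℤ)) (by positivity : (0:ℤ) ≤ (n':ℤ))]
  obtain ⟨u0, hu0v, hu0⟩ := hnonnbr
  obtain ⟨Q0, hQ0card, hQ0adj, hQ0pair⟩ := sat_clique hp1 hmono hsat v u0 hu0v.symm hu0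
  have hQ0A : Q0 ⊆ G.neighborFinset v := by
    intro w hw
    rw [mem_neighborFinset]
    exact (hQ0adj w hw).1
  have hδq : q ≤ δ := le_trans hQ0card (Finset.card_le_card hQ0A)
  rw [hdeg v]
  by_contra hnq
  have hδ1 : q + 1 ≤ δ := by omega
  have hδ2q : δ ≤ 2 * q := by
    by_contra hc
    have h1 : n * (2 * q + 1) ≤ n * δ := Nat.mul_le_mul_left n (by omega)
    have h2 : n * (2 * q + 1) = 2 * (q * n) + n := by ring
    omega
  have hq1 : 1 ≤ q := by omega
  set A := G.neighborFinset v with hAdef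
  set B := univ.filter (fun b : Fin n => b ≠ v ∧ ¬ G.Adj v b) with hBdef
  have hBeq : B = (insert v A)ᶜ := by
    ext b
    simp only [hBdef, Finset.mem_filter, Finset.mem_univ, true_and, Finset.mem_compl,
      Finset.mem_insert, mem_neighborFinset, hAdef]
    tauto
  have hvA : v ∉ A := by simp [hAdef]
  set m := #B with hmdef
  have hAcard : #A = δ := rfl
  have hmn : m + δ + 1 = n := by
    have h1 : #(insert v A) = δ + 1 := by
      rw [Finset.card_insert_of_notMem hvA, hAcard]
    have h2 : #(insert v A) ≤ n := by
      calc #(insert v A) ≤ #(univ : Finset (Fin n)) := Finset.card_le_card (Finset.subset_univ _)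
      _ = n := by rw [card_univ, Fintype.card_fin]
    rw [hmdef, hBeq, Finset.card_compl, Fintype.card_fin, h1]
    omega
  have hsplit : G.degree v + ∑ a ∈ A, G.degree a + ∑ b ∈ B, G.degree b = ∑ u, G.degree u := by
    rw [hBeq, ← Finset.sum_add_sum_compl (insert v A) (fun u => G.degree u), Finset.sum_insert hvA]
  have hdAB : Disjoint A B := by
    rw [hBeq]
    exact disjoint_compl_right.mono_left (Finset.subset_insert v A)
  have hsumB : m * δ ≤ ∑ b ∈ B, G.degree b := by
    calc m * δ = #B • δ := by rw [smul_eq_mul, hmdef]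
    _ ≤ ∑ b ∈ B, G.degree b := Finset.card_nsmul_le_sum B _ δ (fun b _ => hδmin b)
  obtain ⟨Q, hQsub, hQcard⟩ := Finset.exists_subset_card_eq hQ0card
  have hQA : Q ⊆ A := fun w hw => hQ0A (hQsub hw)
  have hdegA : ∀ a ∈ A, 1 + #(A.filter (fun w => G.Adj a w)) + #(B.filter (fun w => G.Adj a w))
      ≤ G.degree a := by
    intro a ha
    have hav : G.Adj a v := ((mem_neighborFinset G v a).mp ha).symm
    have hsub : ({v} ∪ A.filter (fun w => G.Adj a w)) ∪ B.filter (fun w => G.Adj a w)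
        ⊆ G.neighborFinset a := by
      intro w hw
      simp only [Finset.mem_union, Finset.mem_singleton, Finset.mem_filter] at hw
      rw [mem_neighborFinset]
      rcases hw with (rfl | hw) | hw
      · exact hav
      · exact hw.2
      · exact hw.2
    have hd1 : Disjoint ({v} : Finset (Fin n)) (A.filter (fun w => G.Adj a w)) := by
      rw [Finset.disjoint_singleton_left]
      intro hvmem
      exact hvA (Finset.mem_filter.mp hvmem).1
    have hd2 : Disjoint (({v} : Finset (Fin n)) ∪ A.filter (fun w => G.Adj a w))
        (B.filter (fun w => G.Adj a w)) := by
      refine Finset.disjoint_union_left.mpr ⟨?_, ?_⟩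
      · rw [Finset.disjoint_singleton_left]
        intro hvmem
        have := (Finset.mem_filter.mp hvmem).1
        rw [hBdef, Finset.mem_filter] at this
        exact this.2.1 rfl
      · exact (hdAB.mono (Finset.filter_subset _ _) (Finset.filter_subset _ _))
    calc 1 + #(A.filter (fun w => G.Adj a w)) + #(B.filter (fun w => G.Adj a w))
        = #(({v} : Finset (Fin n)) ∪ A.filter (fun w => G.Adj a w))
          + #(B.filter (fun w => G.Adj a w)) := by
          rw [Finset.card_union_of_disjoint hd1, Finset.card_singleton]
    _ = #((({v} : Finset (Fin n)) ∪ A.filter (fun w => G.Adj a w))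
          ∪ B.filter (fun w => G.Adj a w)) := (Finset.card_union_of_disjoint hd2).symm
    _ ≤ #(G.neighborFinset a) := Finset.card_le_card hsub
    _ = G.degree a := rfl
  have hsumA1 : ∑ a ∈ A, (1 + #(A.filter (fun w => G.Adj a w))
      + #(B.filter (fun w => G.Adj a w))) ≤ ∑ a ∈ A, G.degree a := Finset.sum_le_sum hdegA
  have hsplitA : ∑ a ∈ A, (1 + #(A.filter (fun w => G.Adj a w))
      + #(B.filter (fun w => G.Adj a w)))
      = δ + ∑ a ∈ A, #(A.filter (fun w => G.Adj a w))
        + ∑ a ∈ A, #(B.filter (fun w => G.Adj a w)) := by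
    rw [Finset.sum_add_distrib, Finset.sum_add_distrib, Finset.sum_const, smul_eq_mul,
      mul_one, hAcard]
  have hcliq : q * (q - 1) ≤ ∑ a ∈ A, #(A.filter (fun w => G.Adj a w)) := by
    have hstep : ∀ a ∈ Q, q - 1 ≤ #(A.filter (fun w => G.Adj a w)) := by
      intro a ha
      have hsub2 : Q.erase a ⊆ A.filter (fun w => G.Adj a w) := by
        intro w hw
        rw [Finset.mem_erase] at hw
        rw [Finset.mem_filter]
        exact ⟨hQA hw.2, hQ0pair a (hQsub ha) w (hQsub hw.2) (fun h => hw.1 h.symm)⟩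
      calc q - 1 = #(Q.erase a) := by rw [Finset.card_erase_of_mem ha, hQcard]
      _ ≤ _ := Finset.card_le_card hsub2
    calc q * (q - 1) = ∑ _a ∈ Q, (q - 1) := by
          rw [Finset.sum_const, hQcard, smul_eq_mul]
    _ ≤ ∑ a ∈ Q, #(A.filter (fun w => G.Adj a w)) := Finset.sum_le_sum hstep
    _ ≤ ∑ a ∈ A, #(A.filter (fun w => G.Adj a w)) :=
        Finset.sum_le_sum_of_subset hQA
  have hswap : ∑ a ∈ A, #(B.filter (fun w => G.Adj a w))
      = ∑ b ∈ B, #(A.filter (fun a => G.Adj a b)) := by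
    simp_rw [Finset.card_filter]
    exact Finset.sum_comm
  have hBq : ∀ b ∈ B, q ≤ #(A.filter (fun a => G.Adj a b)) := by
    intro b hb
    rw [hBdef, Finset.mem_filter] at hb
    obtain ⟨-, hbv, hbadj⟩ := hb
    obtain ⟨Qb, hQbcard, hQbadj, -⟩ := sat_clique hp1 hmono hsat v b hbv.symm hbadj
    refine le_trans hQbcard (Finset.card_le_card ?_)
    intro w hw
    refine Finset.mem_filter.mpr ⟨?_, ?_⟩
    · rw [hAdef, mem_neighborFinset]
      exact (hQbadj w hw).1
    · exact ((hQbadj w hw).2).symm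
  have hsumBA : m * q ≤ ∑ a ∈ A, #(B.filter (fun w => G.Adj a w)) := by
    rw [hswap]
    calc m * q = #B • q := by rw [smul_eq_mul, hmdef]
    _ ≤ ∑ b ∈ B, #(A.filter (fun a => G.Adj a b)) :=
        Finset.card_nsmul_le_sum B _ q hBq
  have hfinal : δ + (δ + q * (q - 1) + m * q) + m * δ ≤ 2 * G.edgeSet.ncard := by
    rw [← hEG, ← hsplit]
    have h1 : δ + q * (q - 1) + m * q ≤ ∑ a ∈ A, G.degree a := by
      have h2 : δ + q * (q - 1) + m * q
          ≤ δ + (∑ a ∈ A, #(A.filter (fun w => G.Adj a w)))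
            + (∑ a ∈ A, #(B.filter (fun w => G.Adj a w))) :=
        Nat.add_le_add (Nat.add_le_add le_rfl hcliq) hsumBA
      rw [← hsplitA] at h2
      exact le_trans h2 hsumA1
    exact Nat.add_le_add (Nat.add_le_add le_rfl h1) hsumB
  have hc1 : (1:ℤ) ≤ (q:ℤ) := by exact_mod_cast hq1
  zify [hq1] at hfinal hkey hδ1 hδ2q hmn hn hT2
  nlinarith [mul_nonneg (by linarith : (0:ℤ) ≤ (δ:ℤ) - (q:ℤ) - 1)
      (by nlinarith : (0:ℤ) ≤ (T:ℤ) - ((δ:ℤ) - (q:ℤ) - 1)),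
    mul_nonneg (by linarith : (0:ℤ) ≤ (δ:ℤ) - (q:ℤ) - 1)
      (by linarith : (0:ℤ) ≤ 2*(q:ℤ) - (δ:ℤ))]
end
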